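/- arXiv:2011.05407 — 4 statements merged into one kernel-verified Lean document; each statement's English description precedes it below -/
import Mathlib

section
/- For Re(s) > 2 and a positive integer w, the sum over k from 1 to w of the Barnes double zeta function ζ_B(s; w, 1, k) equals ζ_R(s-1), the Riemann zeta function evaluated at s-1. Here ζ_B(s; a, b, x) = Σ_{m,n≥0} (am + bn + x)^{-s}. -/
/-- The Barnes double zeta function, defined for `Re s > 2` by the double series
`ζ_B(s; a, b, x) = Σ_{m,n≥0} (a m + b n + x)^{-s}`. -/
noncomputable def barnesZeta (s : ℂ) (a b x : ℝ) : ℂ :=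
  ∑' p : ℕ × ℕ, ((a * p.1 + b * p.2 + x : ℝ) : ℂ) ^ (-s)

/-- The diagonal slicing equivalence `(Σ l, Fin (l+1)) ≃ ℕ × ℕ`, `⟨l, i⟩ ↦ (l - i, i)`. -/
def diagEquiv : (Σ l : ℕ, Fin (l + 1)) ≃ ℕ × ℕ where
  toFun q := (q.1 - q.2, q.2)
  invFun p := ⟨p.1 + p.2, ⟨p.2, by omega⟩⟩
  left_inv := by
    rintro ⟨l, ⟨i, hi⟩⟩
    have h : l - i + i = l := by omega
    refine Sigma.ext h ?_
    exact (Fin.heq_ext_iff (by simp [h])).mpr rfl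
  right_inv := by rintro ⟨j, n⟩; simp

/-- The key summability: norms of `(j + n + 1)^{-s}` over `ℕ × ℕ`. -/
lemma summable_norm_aux {s : ℂ} (hs : 2 < s.re) :
    Summable (fun p : ℕ × ℕ => ‖(((p.1 + p.2 + 1 : ℕ) : ℂ)) ^ (-s)‖) := by
  have hnorm : ∀ t : ℕ, ‖(((t + 1 : ℕ) : ℂ)) ^ (-s)‖ = ((t + 1 : ℝ)) ^ (-s.re) := by
    intro t
    have hpos : (0 : ℝ) < (t + 1 : ℕ) := by positivity
    rw [show (((t + 1 : ℕ) : ℂ)) = (((t + 1 : ℕ) : ℝ) : ℂ) by push_cast; ring]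
    rw [Complex.norm_cpow_eq_rpow_re_of_pos hpos]
    push_cast
    simp
  rw [← diagEquiv.summable_iff]
  have hfun : (fun p : ℕ × ℕ => ‖(((p.1 + p.2 + 1 : ℕ) : ℂ)) ^ (-s)‖) ∘ diagEquiv
      = fun q : Σ l : ℕ, Fin (l + 1) => ((q.1 + 1 : ℝ)) ^ (-s.re) := by
    funext ⟨l, ⟨i, hi⟩⟩
    simp only [Function.comp_apply, diagEquiv, Equiv.coe_fn_mk]
    rw [show (l - i + i + 1 : ℕ) = l + 1 by omega, hnorm]
  rw [hfun]
  rw [summable_sigma_of_nonneg (fun q => by positivity)]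
  constructor
  · intro l; exact (hasSum_fintype _).summable
  · have : (fun l : ℕ => ∑' i : Fin (l + 1), ((l + 1 : ℝ)) ^ (-s.re))
        = fun l : ℕ => ((l + 1 : ℝ)) ^ (1 - s.re) := by
      funext l
      rw [tsum_fintype, Finset.sum_const, Finset.card_univ, Fintype.card_fin, nsmul_eq_mul]
      have h1 : (0 : ℝ) < (l : ℝ) + 1 := by positivity
      rw [show (1 - s.re) = 1 + (-s.re) by ring, Real.rpow_add h1, Real.rpow_one]
      push_cast
      ring
    rw [this]
    have hsum : Summable (fun n : ℕ => ((n : ℝ)) ^ (1 - s.re)) :=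
      Real.summable_nat_rpow.mpr (by linarith)
    have h2 := hsum.comp_injective (add_left_injective 1)
    refine h2.congr fun l => ?_
    simp [Function.comp]

lemma summable_aux {s : ℂ} (hs : 2 < s.re) :
    Summable (fun p : ℕ × ℕ => (((p.1 + p.2 + 1 : ℕ) : ℂ)) ^ (-s)) :=
  (summable_norm_aux hs).of_norm

/-- The total sum `Σ_{j,n ≥ 0} (j + n + 1)^{-s}` equals `ζ(s-1)`. -/
lemma tsum_diag_eq_zeta {s : ℂ} (hs : 2 < s.re) :
    ∑' p : ℕ × ℕ, (((p.1 + p.2 + 1 : ℕ) : ℂ)) ^ (-s) = riemannZeta (s - 1) := by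
  have hs1 : 1 < (s - 1).re := by
    rw [Complex.sub_re, Complex.one_re]; linarith
  rw [zeta_eq_tsum_one_div_nat_add_one_cpow hs1,
    ← diagEquiv.tsum_eq (fun p : ℕ × ℕ => (((p.1 + p.2 + 1 : ℕ) : ℂ)) ^ (-s))]
  have hsum : Summable ((fun p : ℕ × ℕ => (((p.1 + p.2 + 1 : ℕ) : ℂ)) ^ (-s)) ∘ diagEquiv) :=
    diagEquiv.summable_iff.mpr (summable_aux hs)
  have hsum' : Summable (fun c : Σ l : ℕ, Fin (l + 1) =>
      ((((diagEquiv c).1 + (diagEquiv c).2 + 1 : ℕ)) : ℂ) ^ (-s)) := hsum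
  rw [Summable.tsum_sigma hsum']
  refine tsum_congr fun l => ?_
  have hl : ((l : ℂ) + 1) ≠ 0 := Nat.cast_add_one_ne_zero l
  have h1 : ∀ i : Fin (l + 1),
      (fun p : ℕ × ℕ => (((p.1 + p.2 + 1 : ℕ) : ℂ)) ^ (-s)) (diagEquiv ⟨l, i⟩)
      = ((l : ℂ) + 1) ^ (-s) := by
    rintro ⟨i, hi⟩
    simp only [diagEquiv, Equiv.coe_fn_mk]
    rw [show (l - i + i + 1 : ℕ) = l + 1 by omega]
    push_cast
    ring_nf
  rw [tsum_congr h1, tsum_fintype, Finset.sum_const, Finset.card_univ, Fintype.card_fin,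
    nsmul_eq_mul, one_div, ← Complex.cpow_neg, show -(s - 1) = 1 + (-s) by ring,
    Complex.cpow_add _ _ hl, Complex.cpow_one]
  push_cast
  ring

/-- For `Re s > 2` and a positive integer `w`,
`Σ_{k=1}^{w} ζ_B(s; w, 1, k) = ζ_R(s - 1)`. -/
theorem sum_barnesZeta_eq_riemannZeta (w : ℕ) (hw : 0 < w) (s : ℂ) (hs : 2 < s.re) :
    ∑ k ∈ Finset.Icc 1 w, barnesZeta s (w : ℝ) 1 (k : ℝ) = riemannZeta (s - 1) := by
  classical
  set f : ℕ × ℕ → ℂ := fun p => (((p.1 + p.2 + 1 : ℕ) : ℂ)) ^ (-s) with hf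
  set g : ℕ → ℕ × ℕ → ℂ := fun k p => if p.1 % w = k - 1 then f p else 0 with hg
  have hfs : Summable f := summable_aux hs
  have hgs : ∀ k, Summable (g k) := by
    intro k
    have : g k = Set.indicator {p : ℕ × ℕ | p.1 % w = k - 1} f := by
      funext p; simp [hg, Set.indicator_apply]
    rw [this]; exact hfs.indicator _
  have hbar : ∀ k ∈ Finset.Icc 1 w, barnesZeta s (w : ℝ) 1 (k : ℝ) = ∑' p : ℕ × ℕ, g k p := by
    intro k hk
    rw [Finset.mem_Icc] at hk
    have hinj : Function.Injective (fun p : ℕ × ℕ => (w * p.1 + (k - 1), p.2)) := by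
      intro p q h
      simp only [Prod.mk.injEq] at h
      obtain ⟨h1, h2⟩ := h
      have h3 : w * p.1 = w * q.1 := by omega
      exact Prod.ext (Nat.eq_of_mul_eq_mul_left hw h3) h2
    have hsupp : Function.support (g k)
        ⊆ Set.range (fun p : ℕ × ℕ => (w * p.1 + (k - 1), p.2)) := by
      intro q hq
      have hcond : q.1 % w = k - 1 := by
        by_contra hc
        exact hq (by simp [hg, hc])
      refine ⟨(q.1 / w, q.2), ?_⟩
      have hdm := Nat.div_add_mod q.1 w
      exact Prod.ext (show w * (q.1 / w) + (k - 1) = q.1 by omega) rfl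
    rw [barnesZeta, ← hinj.tsum_eq hsupp]
    refine tsum_congr fun p => ?_
    have hcond : (w * p.1 + (k - 1)) % w = k - 1 := by
      rw [Nat.mul_add_mod]
      exact Nat.mod_eq_of_lt (by omega)
    simp only [hg, hf, hcond, if_pos]
    congr 1
    rw [show (w * p.1 + (k - 1)) + p.2 + 1 = w * p.1 + p.2 + k by omega]
    push_cast
    ring
  rw [Finset.sum_congr rfl hbar, ← Summable.tsum_finsetSum (fun k _ => hgs k), ← tsum_diag_eq_zeta hs]
  refine tsum_congr fun p => ?_
  have hlt : p.1 % w < w := Nat.mod_lt _ hw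
  rw [Finset.sum_eq_single_of_mem (p.1 % w + 1)
    (by rw [Finset.mem_Icc]; omega)]
  · simp [hg, hf]
  · intro k hk hne
    rw [Finset.mem_Icc] at hk
    exact if_neg fun hc => hne (by omega)
end

section
/- For Re(s) > 2 and a positive integer w, ζ_B(s; w, 1, 1) = (1/w) ζ_R(s−1) + w^{−s−1} Σ_{j=1}^{w−1} (w − j) ζ_H(s; j/w). -/
/-- The Hurwitz zeta function, defined for `Re s > 1` by the series
`ζ_H(s; x) = Σ_{m≥0} (m + x)^{-s}`. -/
noncomputable def hurwitzZetaSeries (s : ℂ) (x : ℝ) : ℂ :=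
  ∑' m : ℕ, ((m + x : ℝ) : ℂ) ^ (-s)

open Complex Finset

/-- The general term `N ^ {-s}` (with `N : ℕ` cast through `ℝ`). -/
noncomputable def cterm (s : ℂ) (N : ℕ) : ℂ := ((N : ℝ) : ℂ) ^ (-s)

lemma norm_cterm (s : ℂ) {N : ℕ} (hN : 0 < N) : ‖cterm s N‖ = (N : ℝ) ^ (-s.re) := by
  rw [cterm,
    Complex.norm_cpow_eq_rpow_re_of_pos (by exact_mod_cast hN), neg_re]

lemma summable_shift {r : ℝ} (hr : 1 < r) :
    Summable (fun n : ℕ => ((n : ℝ) + 1) ^ (-r)) := by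
  have h1 := (Real.summable_nat_rpow (p := -r)).mpr (by linarith)
  have h2 := (summable_nat_add_iff 1).mpr h1
  exact h2.congr fun n => by push_cast; ring_nf

lemma summable_lin (w j : ℕ) (hw : 1 ≤ w) (hj : 1 ≤ j) {r : ℝ} (hr : 1 < r) :
    Summable (fun q : ℕ => ((w * q + j : ℕ) : ℝ) ^ (-r)) := by
  refine Summable.of_nonneg_of_le (fun q => Real.rpow_nonneg (by positivity) _)
    (fun q => ?_) (summable_shift hr)
  have h1 : (0:ℝ) < (q:ℝ) + 1 := by positivity
  have h2 : ((q:ℝ) + 1) ≤ ((w * q + j : ℕ) : ℝ) := by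
    have hw' : (1:ℝ) ≤ (w:ℝ) := by exact_mod_cast hw
    have hj' : (1:ℝ) ≤ (j:ℝ) := by exact_mod_cast hj
    push_cast; nlinarith
  exact Real.rpow_le_rpow_of_nonpos h1 h2 (by linarith)

lemma summable_base {r : ℝ} (hr : 2 < r) :
    Summable (fun p : ℕ × ℕ => ((p.1 + p.2 + 1 : ℕ) : ℝ) ^ (-r)) := by
  rw [← (Finset.HasAntidiagonal.sigmaAntidiagonalEquivProd (A := ℕ)).summable_iff]
  have hnn : ∀ x : Σ n : ℕ, (antidiagonal n : Finset (ℕ × ℕ)),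
      0 ≤ ((((x.2 : ℕ × ℕ).1 + (x.2 : ℕ × ℕ).2 + 1 : ℕ) : ℝ)) ^ (-r) :=
    fun x => Real.rpow_nonneg (by positivity) _
  refine (summable_sigma_of_nonneg hnn).mpr ⟨fun n => Summable.of_finite, ?_⟩
  · have key : ∀ n : ℕ, (∑' y : (antidiagonal n : Finset (ℕ × ℕ)),
        (((y : ℕ × ℕ).1 + (y : ℕ × ℕ).2 + 1 : ℕ) : ℝ) ^ (-r)) = ((n:ℝ) + 1) ^ (1 - r) := by
      intro n
      have : ∀ y : (antidiagonal n : Finset (ℕ × ℕ)),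
          ((((y : ℕ × ℕ).1 + (y : ℕ × ℕ).2 + 1 : ℕ) : ℝ)) ^ (-r)
            = ((n + 1 : ℕ) : ℝ) ^ (-r) := by
        rintro ⟨⟨a, b⟩, hy⟩
        have := Finset.HasAntidiagonal.mem_antidiagonal.mp hy
        simp only at this ⊢
        rw [this]
      rw [tsum_congr this, tsum_const, Nat.card_eq_fintype_card, Fintype.card_coe,
        Nat.card_antidiagonal, nsmul_eq_mul]
      have hpos : (0:ℝ) < (n:ℝ) + 1 := by positivity
      rw [show (1 : ℝ) - r = 1 + (-r) by ring, Real.rpow_add hpos, Real.rpow_one]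
      push_cast; ring
    rw [funext key]
    exact (summable_shift (r := r - 1) (by linarith)).congr fun n => by ring_nf

lemma csummable_lin (w j : ℕ) (hw : 1 ≤ w) (hj : 1 ≤ j) {s : ℂ} (hs : 1 < s.re) :
    Summable (fun q : ℕ => cterm s (w * q + j)) := by
  refine Summable.of_norm ((summable_lin w j hw hj hs).congr fun q => ?_)
  rw [norm_cterm s (by positivity)]

lemma csummable_lin' (w j : ℕ) (hw : 1 ≤ w) (hj : 1 ≤ j) {s : ℂ} (hs : 2 < s.re) :
    Summable (fun q : ℕ => ((w * q + j : ℕ) : ℂ) * cterm s (w * q + j)) := by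
  refine Summable.of_norm ((summable_lin w j hw hj (r := s.re - 1) (by linarith)).congr
    fun q => ?_)
  have hN : 0 < w * q + j := by positivity
  have hNR : (0:ℝ) < ((w * q + j : ℕ) : ℝ) := by exact_mod_cast hN
  rw [norm_mul, norm_cterm s hN, Complex.norm_natCast,
    show -(s.re - 1) = 1 + (-s.re) by ring, Real.rpow_add hNR, Real.rpow_one]

lemma csummable_pair (w j : ℕ) (hw : 1 ≤ w) (hj : 1 ≤ j) {s : ℂ} (hs : 2 < s.re) :
    Summable (fun p : ℕ × ℕ => cterm s (w * (p.1 + p.2) + j)) := by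
  refine Summable.of_norm (Summable.of_nonneg_of_le (fun p => norm_nonneg _)
    (fun p => ?_) (summable_base hs))
  rw [norm_cterm s (by positivity)]
  have h1 : (0:ℝ) < ((p.1 + p.2 + 1 : ℕ) : ℝ) := by positivity
  have h2 : ((p.1 + p.2 + 1 : ℕ) : ℝ) ≤ ((w * (p.1 + p.2) + j : ℕ) : ℝ) := by
    have : p.1 + p.2 + 1 ≤ w * (p.1 + p.2) + j := by nlinarith
    exact_mod_cast this
  exact Real.rpow_le_rpow_of_nonpos h1 h2 (by simp; linarith)

lemma tsum_pair_eq (w j : ℕ) (hw : 1 ≤ w) (hj : 1 ≤ j) {s : ℂ} (hs : 2 < s.re) :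
    ∑' p : ℕ × ℕ, cterm s (w * (p.1 + p.2) + j)
      = ∑' n : ℕ, ((n : ℂ) + 1) * cterm s (w * n + j) := by
  have hsum := csummable_pair w j hw hj hs
  rw [← Equiv.tsum_eq (Finset.HasAntidiagonal.sigmaAntidiagonalEquivProd (A := ℕ))
    (fun p : ℕ × ℕ => cterm s (w * (p.1 + p.2) + j))]
  rw [Summable.tsum_sigma' (f := fun c : (n : ℕ) × { x // x ∈ antidiagonal n } =>
      cterm s (w * ((Finset.HasAntidiagonal.sigmaAntidiagonalEquivProd c).1 + (Finset.HasAntidiagonal.sigmaAntidiagonalEquivProd c).2) + j))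
    (fun n => Summable.of_finite)
    ((Finset.HasAntidiagonal.sigmaAntidiagonalEquivProd (A := ℕ)).summable_iff.mpr hsum)]
  refine tsum_congr fun n => ?_
  have hterm : ∀ y : (antidiagonal n : Finset (ℕ × ℕ)),
      cterm s (w * ((y : ℕ × ℕ).1 + (y : ℕ × ℕ).2) + j) = cterm s (w * n + j) := by
    rintro ⟨⟨a, b⟩, hy⟩
    have := Finset.HasAntidiagonal.mem_antidiagonal.mp hy
    simp only at this ⊢
    rw [this]
  simp only [Finset.HasAntidiagonal.sigmaAntidiagonalEquivProd_apply]
  rw [tsum_congr hterm, tsum_const, Nat.card_eq_fintype_card, Fintype.card_coe,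
    Nat.card_antidiagonal, nsmul_eq_mul]
  push_cast; ring

lemma tsum_residue (w : ℕ) (hw : 0 < w) (g : ℕ → ℂ) (hg : Summable g) :
    ∑' n, g n = ∑ r : Fin w, ∑' q : ℕ, g (w * q + (r : ℕ)) := by
  haveI : NeZero w := ⟨hw.ne'⟩
  set E : Fin w × ℕ ≃ ℕ :=
    (Equiv.prodComm (Fin w) ℕ).trans (Nat.divModEquiv w).symm with hE
  rw [← Equiv.tsum_eq E g]
  have hgE : Summable (g ∘ E) := E.summable_iff.mpr hg
  rw [Summable.tsum_prod' (f := fun c : Fin w × ℕ => g (E c)) hgE fun r => hgE.prod_factor r]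
  rw [tsum_fintype]
  refine Finset.sum_congr rfl fun r _ => tsum_congr fun q => ?_
  show g (q * w + (r : ℕ)) = g (w * q + (r : ℕ))
  rw [Nat.mul_comm]

lemma zeta_eq (s : ℂ) (hs : 2 < s.re) :
    riemannZeta (s - 1) = ∑' n : ℕ, ((n : ℂ) + 1) * cterm s (n + 1) := by
  rw [zeta_eq_tsum_one_div_nat_add_one_cpow (by simp [sub_re]; linarith)]
  refine tsum_congr fun n => ?_
  have hne : ((n : ℂ) + 1) ≠ 0 := by
    exact_mod_cast Nat.cast_add_one_ne_zero (R := ℂ) n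
  rw [cterm, one_div, ← cpow_neg]
  have h1 : ((n + 1 : ℕ) : ℝ) = ((n : ℝ) + 1) := by push_cast; ring
  rw [h1]
  have h2 : (((n : ℝ) + 1 : ℝ) : ℂ) = (n : ℂ) + 1 := by push_cast; ring
  rw [h2]
  rw [show -(s - 1) = 1 + (-s) by ring, cpow_add _ _ hne, cpow_one]

lemma summable_zeta_terms (s : ℂ) (hs : 2 < s.re) :
    Summable (fun n : ℕ => ((n : ℂ) + 1) * cterm s (n + 1)) := by
  refine Summable.of_norm ((summable_shift (r := s.re - 1) (by linarith)).congr fun n => ?_)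
  have hNR : (0:ℝ) < (n : ℝ) + 1 := by positivity
  rw [norm_mul, norm_cterm s (Nat.succ_pos n),
    show ‖(n : ℂ) + 1‖ = (n : ℝ) + 1 by
      rw [show ((n : ℂ) + 1) = (((n:ℝ) + 1 : ℝ) : ℂ) by push_cast; ring, Complex.norm_real,
        Real.norm_of_nonneg hNR.le]]
  have h1 : ((n + 1 : ℕ) : ℝ) = ((n : ℝ) + 1) := by push_cast; ring
  rw [h1, show -(s.re - 1) = 1 + (-s.re) by ring, Real.rpow_add hNR, Real.rpow_one]

lemma hurwitz_eq (w j : ℕ) (hw : 0 < w) (hj : 1 ≤ j) (s : ℂ) :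
    ∑' q : ℕ, cterm s (w * q + j)
      = (w : ℂ) ^ (-s) * hurwitzZetaSeries s ((j : ℝ) / w) := by
  rw [hurwitzZetaSeries, ← tsum_mul_left]
  refine tsum_congr fun m => ?_
  have hwR : (0:ℝ) < (w : ℝ) := by exact_mod_cast hw
  have h1 : ((w * m + j : ℕ) : ℝ) = (w : ℝ) * ((m : ℝ) + (j : ℝ) / w) := by
    field_simp; push_cast; ring
  rw [cterm, h1, Complex.ofReal_mul, mul_cpow_ofReal_nonneg hwR.le (by positivity)]
  norm_cast

lemma csummable_master (w : ℕ) (hw : 1 ≤ w) {s : ℂ} (hs : 2 < s.re) :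
    Summable (fun p : ℕ × ℕ => cterm s (w * p.1 + p.2 + 1)) := by
  refine Summable.of_norm (Summable.of_nonneg_of_le (fun p => norm_nonneg _)
    (fun p => ?_) (summable_base hs))
  rw [norm_cterm s (by positivity)]
  have h1 : (0:ℝ) < ((p.1 + p.2 + 1 : ℕ) : ℝ) := by positivity
  have h2 : ((p.1 + p.2 + 1 : ℕ) : ℝ) ≤ ((w * p.1 + p.2 + 1 : ℕ) : ℝ) := by
    have : p.1 + p.2 + 1 ≤ w * p.1 + p.2 + 1 := by nlinarith
    exact_mod_cast this
  exact Real.rpow_le_rpow_of_nonpos h1 h2 (by simp; linarith)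

lemma barnes_residue (w : ℕ) (hw : 0 < w) {s : ℂ} (hs : 2 < s.re) :
    ∑' p : ℕ × ℕ, cterm s (w * p.1 + p.2 + 1)
      = ∑ r : Fin w, ∑' p : ℕ × ℕ, cterm s (w * (p.1 + p.2) + ((r : ℕ) + 1)) := by
  haveI : NeZero w := ⟨hw.ne'⟩
  set f : ℕ × ℕ → ℂ := fun p => cterm s (w * p.1 + p.2 + 1) with hf
  set E : Fin w × (ℕ × ℕ) ≃ ℕ × ℕ :=
    (Equiv.prodComm (Fin w) (ℕ × ℕ)).trans ((Equiv.prodAssoc ℕ ℕ (Fin w)).trans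
      ((Equiv.refl ℕ).prodCongr (Nat.divModEquiv w).symm)) with hE
  have hsumf : Summable f := csummable_master w hw hs
  rw [← Equiv.tsum_eq E f]
  have hfE : Summable (f ∘ E) := E.summable_iff.mpr hsumf
  rw [Summable.tsum_prod' (f := fun y : Fin w × (ℕ × ℕ) => f (E y)) hfE (fun r => hfE.prod_factor r),
    tsum_fintype]
  refine Finset.sum_congr rfl fun r _ => tsum_congr fun p => ?_
  show cterm s (w * p.1 + (p.2 * w + (r : ℕ)) + 1) = cterm s (w * (p.1 + p.2) + ((r : ℕ) + 1))
  congr 1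
  ring

lemma residue_split (w j : ℕ) (hw : 1 ≤ w) (hj : 1 ≤ j) {s : ℂ} (hs : 2 < s.re) :
    ∑' n : ℕ, ((n : ℂ) + 1) * cterm s (w * n + j)
      = (1 / w : ℂ) * (∑' q : ℕ, ((w * q + j : ℕ) : ℂ) * cterm s (w * q + j))
        + ((w : ℂ) - j) * (w : ℂ)⁻¹ * ∑' q : ℕ, cterm s (w * q + j) := by
  have hwC : (w : ℂ) ≠ 0 := Nat.cast_ne_zero.mpr (by omega)
  have hT := csummable_lin' w j hw hj hs
  have hU := csummable_lin w j hw hj (by linarith : 1 < s.re)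
  have key : ∀ n : ℕ, ((n : ℂ) + 1) * cterm s (w * n + j)
      = (1 / w : ℂ) * (((w * n + j : ℕ) : ℂ) * cterm s (w * n + j))
        + ((w : ℂ) - j) * (w : ℂ)⁻¹ * cterm s (w * n + j) := by
    intro n
    have : ((n : ℂ) + 1) = (1 / w : ℂ) * ((w * n + j : ℕ) : ℂ) + ((w : ℂ) - j) * (w : ℂ)⁻¹ := by
      field_simp
      push_cast
      ring
    rw [this]; ring
  rw [tsum_congr key, Summable.tsum_add (hT.mul_left _) (hU.mul_left _), tsum_mul_left, tsum_mul_left]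

lemma fin_sum_to_Icc (w : ℕ) (hw : 0 < w) (G : ℕ → ℂ) (hGw : G w = 0) :
    ∑ r : Fin w, G ((r : ℕ) + 1) = ∑ j ∈ Finset.Icc 1 (w - 1), G j := by
  rw [Fin.sum_univ_eq_sum_range (fun i => G (i + 1)) w]
  have h2 : ∑ j ∈ Icc 1 w, G j = ∑ i ∈ range w, G (i + 1) := by
    rw [← Finset.Ico_add_one_right_eq_Icc, Finset.sum_Ico_eq_sum_range]
    rw [show w + 1 - 1 = w by omega]
    exact Finset.sum_congr rfl fun i _ => by rw [Nat.add_comm]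
  have h3 : ∑ j ∈ Icc 1 w, G j = ∑ j ∈ Icc 1 (w - 1), G j + G w := by
    conv_lhs => rw [show w = (w - 1) + 1 by omega]
    rw [Finset.sum_Icc_succ_top (by omega), show (w - 1) + 1 = w by omega]
  rw [← h2, h3, hGw, add_zero]

/-- For `Re s > 2` and a positive integer `w`,
`ζ_B(s; w, 1, 1) = (1/w) ζ_R(s−1) + w^{−s−1} Σ_{j=1}^{w−1} (w − j) ζ_H(s; j/w)`. -/
theorem barnesZeta_w_one_one (w : ℕ) (hw : 0 < w) (s : ℂ) (hs : 2 < s.re) :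
    barnesZeta s (w : ℝ) 1 1 =
      (1 / w : ℂ) * riemannZeta (s - 1) +
        (w : ℂ) ^ (-s - 1) *
          ∑ j ∈ Finset.Icc 1 (w - 1), ((w : ℂ) - (j : ℂ)) * hurwitzZetaSeries s ((j : ℝ) / w) := by
  have hw1 : 1 ≤ w := hw
  have hwC : (w : ℂ) ≠ 0 := Nat.cast_ne_zero.mpr (by omega)
  have hL : barnesZeta s (w : ℝ) 1 1
      = ∑ r : Fin w, ((1 / w : ℂ) * (∑' q : ℕ, ((w * q + ((r : ℕ) + 1) : ℕ) : ℂ)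
            * cterm s (w * q + ((r : ℕ) + 1)))
          + ((w : ℂ) - (((r : ℕ) + 1 : ℕ) : ℂ)) * (w : ℂ)⁻¹
            * ∑' q : ℕ, cterm s (w * q + ((r : ℕ) + 1))) := by
    have h0 : barnesZeta s (w : ℝ) 1 1 = ∑' p : ℕ × ℕ, cterm s (w * p.1 + p.2 + 1) := by
      rw [barnesZeta]
      refine tsum_congr fun p => ?_
      rw [cterm]
      norm_num
    rw [h0, barnes_residue w hw hs]
    refine Finset.sum_congr rfl fun r _ => ?_
    rw [tsum_pair_eq w ((r : ℕ) + 1) hw1 (by omega) hs,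
      residue_split w ((r : ℕ) + 1) hw1 (by omega) hs]
  have hZ : riemannZeta (s - 1)
      = ∑ r : Fin w, ∑' q : ℕ, ((w * q + ((r : ℕ) + 1) : ℕ) : ℂ)
          * cterm s (w * q + ((r : ℕ) + 1)) := by
    rw [zeta_eq s hs, tsum_residue w hw _ (summable_zeta_terms s hs)]
    refine Finset.sum_congr rfl fun r _ => tsum_congr fun q => ?_
    rw [show w * q + ((r : ℕ) + 1) = w * q + (r : ℕ) + 1 from rfl]
    congr 1
    push_cast
    ring
  have hH : (w : ℂ) ^ (-s - 1) *
      ∑ j ∈ Finset.Icc 1 (w - 1), ((w : ℂ) - (j : ℂ)) * hurwitzZetaSeries s ((j : ℝ) / w)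
      = ∑ j ∈ Finset.Icc 1 (w - 1), ((w : ℂ) - (j : ℂ)) * (w : ℂ)⁻¹
          * ∑' q : ℕ, cterm s (w * q + j) := by
    rw [Finset.mul_sum]
    refine Finset.sum_congr rfl fun j hj => ?_
    have hj1 : 1 ≤ j := (Finset.mem_Icc.mp hj).1
    rw [hurwitz_eq w j hw hj1 s, show (-s - 1 : ℂ) = -s + (-1) by ring,
      cpow_add _ _ hwC, cpow_neg_one]
    ring
  rw [hL, hZ, hH, Finset.sum_add_distrib, Finset.mul_sum]
  congr 1
  exact fin_sum_to_Icc w hw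
    (fun j => ((w : ℂ) - (j : ℂ)) * (w : ℂ)⁻¹ * ∑' q : ℕ, cterm s (w * q + j))
    (by simp)
end

section
/- For Re(s) > 2 and a positive integer w, ζ_B(s; 1/w, 1, 1) = w^{s−1} ζ_R(s−1) − (1/w) Σ_{j=1}^{w−1} j · ζ_H(s; j/w). -/
open Complex Finset


lemma norm_rcpow {x : ℝ} (hx : 0 < x) (z : ℂ) : ‖((x : ℝ) : ℂ) ^ (-z)‖ = x ^ (-z.re) := by
  rw [Complex.norm_cpow_eq_rpow_re_of_pos hx, Complex.neg_re]

lemma summable_hzs {z : ℂ} (hz : 1 < z.re) {x : ℝ} (hx : 0 < x) :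
    Summable fun m : ℕ => ((m + x : ℝ) : ℂ) ^ (-z) := by
  apply Summable.of_norm
  have h := (Real.summable_one_div_nat_add_rpow x z.re).2 hz
  refine h.congr fun m => ?_
  have hmx : (0:ℝ) < m + x := by positivity
  rw [norm_rcpow hmx, Real.rpow_neg hmx.le, abs_of_pos hmx, one_div]

lemma cpow_div_nat {x : ℝ} (hx : 0 ≤ x) {w : ℕ} (hw : 0 < w) (u : ℂ) :
    ((x / w : ℝ) : ℂ) ^ u = ((x : ℝ) : ℂ) ^ u * ((w : ℂ)) ^ (-u) := by
  have hw0 : (0:ℝ) ≤ 1 / w := by positivity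
  have h1 : (x / w : ℝ) = x * (1 / w) := by ring
  rw [h1, Complex.ofReal_mul, Complex.mul_cpow_ofReal_nonneg hx hw0]
  congr 1
  have h2 : ((1 / (w:ℝ) : ℝ) : ℂ) = ((w : ℂ))⁻¹ := by push_cast; ring
  rw [h2, Complex.inv_cpow _ _ ?_, ← Complex.cpow_neg]
  have h3 : ((w : ℂ)) = (((w : ℝ)) : ℂ) := by push_cast; ring
  rw [h3, Complex.arg_ofReal_of_nonneg (by positivity)]
  exact fun h => Real.pi_ne_zero h.symm

lemma hzs_shift {z : ℂ} (hz : 1 < z.re) {x : ℝ} (hx : 0 < x) :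
    hurwitzZetaSeries z (1 + x) = hurwitzZetaSeries z x - ((x : ℝ) : ℂ) ^ (-z) := by
  unfold hurwitzZetaSeries
  rw [Summable.tsum_eq_zero_add (summable_hzs hz hx)]
  push_cast
  rw [zero_add, add_sub_cancel_left]
  refine tsum_congr fun b => ?_
  congr 1
  ring

lemma fiber_eq (t : ℕ) : ∀ c : {x // x ∈ Finset.HasAntidiagonal.antidiagonal t},
    ((c : ℕ × ℕ).1 + (c : ℕ × ℕ).2) = t := fun c => Finset.HasAntidiagonal.mem_antidiagonal.mp c.2

lemma summable_add_count {g : ℕ → ℝ} (h0 : ∀ t, 0 ≤ g t)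
    (hg : Summable fun t : ℕ => ((t : ℝ) + 1) * g t) :
    Summable fun p : ℕ × ℕ => g (p.1 + p.2) := by
  rw [← (Finset.HasAntidiagonal.sigmaAntidiagonalEquivProd (A := ℕ)).summable_iff]
  apply (summable_sigma_of_nonneg fun _ => h0 _).2
  refine ⟨fun t => (hasSum_fintype _).summable, ?_⟩
  refine hg.congr fun t => ?_
  simp only [Function.comp_apply, Finset.HasAntidiagonal.sigmaAntidiagonalEquivProd_apply]
  rw [tsum_congr (fun c => congrArg g (fiber_eq t c)), tsum_fintype]
  simp only [Finset.sum_const, Finset.card_univ, Fintype.card_coe,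
    Finset.Nat.card_antidiagonal, nsmul_eq_mul]
  push_cast
  ring

lemma tsum_add_count {g : ℕ → ℂ} (hg : Summable fun p : ℕ × ℕ => g (p.1 + p.2)) :
    ∑' p : ℕ × ℕ, g (p.1 + p.2) = ∑' t : ℕ, ((t : ℂ) + 1) * g t := by
  rw [← (Finset.HasAntidiagonal.sigmaAntidiagonalEquivProd (A := ℕ)).tsum_eq (fun p : ℕ × ℕ => g (p.1 + p.2))]
  have hsum : Summable ((fun p : ℕ × ℕ => g (p.1 + p.2)) ∘ ⇑Finset.HasAntidiagonal.sigmaAntidiagonalEquivProd) :=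
    (Finset.HasAntidiagonal.sigmaAntidiagonalEquivProd).summable_iff.2 hg
  have hts := Summable.tsum_sigma' (f := (fun p : ℕ × ℕ => g (p.1 + p.2)) ∘ ⇑Finset.HasAntidiagonal.sigmaAntidiagonalEquivProd)
    (fun b => (hasSum_fintype _).summable) hsum
  simp only [Function.comp_apply] at hts
  rw [hts]
  refine tsum_congr fun t => ?_
  simp only [Finset.HasAntidiagonal.sigmaAntidiagonalEquivProd_apply]
  rw [tsum_congr (fun c => congrArg g (fiber_eq t c)), tsum_fintype]
  simp only [Finset.sum_const, Finset.card_univ, Fintype.card_coe,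
    Finset.Nat.card_antidiagonal, nsmul_eq_mul]
  push_cast
  ring


lemma norm_rcpow' {x : ℝ} (hx : 0 < x) (z : ℂ) : ‖((x : ℝ) : ℂ) ^ (-z)‖ = x ^ (-z.re) := by
  rw [Complex.norm_cpow_eq_rpow_re_of_pos hx, Complex.neg_re]

lemma summable_natcpow {z : ℂ} (hz : 1 < z.re) :
    Summable fun k : ℕ => (((k : ℕ) : ℝ) : ℂ) ^ (-z) := by
  apply Summable.of_norm
  have h := (Real.summable_one_div_nat_add_rpow 0 z.re).2 hz
  refine h.congr fun k => ?_
  rcases Nat.eq_zero_or_pos k with hk | hk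
  · subst hk
    have hz0 : -z ≠ 0 := by
      intro h0
      have : z = 0 := by simpa using congrArg Neg.neg h0
      rw [this] at hz; norm_num at hz
    simp [Complex.zero_cpow hz0, Real.zero_rpow (by positivity : z.re ≠ 0)]
  · have hkp : (0:ℝ) < k := by exact_mod_cast hk
    rw [abs_of_pos (by linarith : (0:ℝ) < (k:ℝ) + 0), add_zero,
      norm_rcpow' hkp, Real.rpow_neg hkp.le, one_div]

lemma tsum_natcpow {z : ℂ} (hz : 1 < z.re) :
    ∑' k : ℕ, (((k : ℕ) : ℝ) : ℂ) ^ (-z) = riemannZeta z := by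
  rw [zeta_eq_tsum_one_div_nat_cpow hz]
  refine tsum_congr fun k => ?_
  rw [Complex.ofReal_natCast, Complex.cpow_neg, one_div]

lemma sum_shifted (w : ℕ) (hw : 0 < w) {z : ℂ} (hz : 1 < z.re) :
    ∑ j : Fin w, ∑' t : ℕ, ((((t + 1) * w + (j : ℕ) : ℕ) : ℝ) : ℂ) ^ (-z) =
      riemannZeta z - ∑ j : Fin w, (((j : ℕ) : ℝ) : ℂ) ^ (-z) := by
  haveI : NeZero w := ⟨hw.ne'⟩
  set φ : ℕ → ℂ := fun k => (((k : ℕ) : ℝ) : ℂ) ^ (-z) with hφdef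
  have hφ : Summable φ := summable_natcpow hz
  have hinj : ∀ j : Fin w, Function.Injective fun q : ℕ => q * w + (j : ℕ) := by
    intro j a b h
    simp only [add_left_inj] at h
    exact Nat.eq_of_mul_eq_mul_right hw h
  -- reindex via divModEquiv
  have he : ∑' p : ℕ × Fin w, φ (p.1 * w + (p.2 : ℕ)) = riemannZeta z := by
    rw [← tsum_natcpow hz]
    have := ((Nat.divModEquiv w).symm).tsum_eq φ
    simpa [Nat.divModEquiv, hφdef] using this
  have hφ' : Summable fun p : ℕ × Fin w => φ (p.1 * w + (p.2 : ℕ)) := by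
    have := ((Nat.divModEquiv w).symm).summable_iff (f := φ)
    refine this.2 hφ |>.congr fun p => ?_
    simp [Nat.divModEquiv]
  rw [Summable.tsum_prod' hφ' (fun b => hφ'.prod_factor b)] at he
  have hinner : ∀ q : ℕ, ∑' j : Fin w, φ (q * w + (j : ℕ)) = ∑ j : Fin w, φ (q * w + (j : ℕ)) :=
    fun q => tsum_fintype _
  rw [tsum_congr hinner] at he
  set ψ : ℕ → ℂ := fun q => ∑ j : Fin w, φ (q * w + (j : ℕ)) with hψdef
  have hψ : Summable ψ := summable_sum fun j _ => hφ.comp_injective (hinj j)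
  rw [Summable.tsum_eq_zero_add hψ] at he
  have h0 : ψ 0 = ∑ j : Fin w, φ (j : ℕ) := by
    refine Finset.sum_congr rfl fun j _ => ?_
    simp
  have h1 : ∑' t : ℕ, ψ (t + 1) = ∑ j : Fin w, ∑' t : ℕ, φ ((t + 1) * w + (j : ℕ)) := by
    exact Summable.tsum_finsetSum fun j _ => hφ.comp_injective fun a b h => by
      simpa using hinj j (by simpa [Nat.add_mul] using h)
  rw [h0, h1] at he
  have : ∀ j : Fin w, (∑' t : ℕ, ((((t + 1) * w + (j : ℕ) : ℕ) : ℝ) : ℂ) ^ (-z)) =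
      ∑' t : ℕ, φ ((t + 1) * w + (j : ℕ)) := fun j => rfl
  rw [Finset.sum_congr rfl fun j _ => this j]
  have hgoal : ∀ j : Fin w, (((j : ℕ) : ℝ) : ℂ) ^ (-z) = φ (j : ℕ) := fun j => rfl
  rw [Finset.sum_congr rfl fun j _ => hgoal j]
  linear_combination he

set_option maxHeartbeats 2000000 in
/-- For `Re s > 2` and a positive integer `w`,
`ζ_B(s; 1/w, 1, 1) = w^{s−1} ζ_R(s−1) − (1/w) Σ_{j=1}^{w−1} j ζ_H(s; j/w)`. -/
theorem barnesZeta_inv_w (w : ℕ) (hw : 0 < w) (s : ℂ) (hs : 2 < s.re) :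
    barnesZeta s (1 / w : ℝ) 1 1 =
      (w : ℂ) ^ (s - 1) * riemannZeta (s - 1) -
        (1 / w : ℂ) * ∑ j ∈ Finset.Icc 1 (w - 1), (j : ℂ) * hurwitzZetaSeries s ((j : ℝ) / w) := by
  haveI : NeZero w := ⟨hw.ne'⟩
  have hwR : (0:ℝ) < w := by exact_mod_cast hw
  have hw1 : (1:ℝ) ≤ w := by exact_mod_cast hw
  have hs1 : 1 < s.re := by linarith
  have hs1' : 1 < (s - 1).re := by
    rw [Complex.sub_re, Complex.one_re]; linarith
  -- the summand
  set F : ℕ × ℕ → ℂ := fun p => ((1 / (w:ℝ) * p.1 + 1 * p.2 + 1 : ℝ) : ℂ) ^ (-s) with hFdef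
  -- master summability
  have hbase : ∀ p : ℕ × ℕ, (0:ℝ) < 1 / (w:ℝ) * p.1 + 1 * p.2 + 1 := fun p => by positivity
  have hsum1σ : Summable fun t : ℕ => ((t:ℝ) + 1) * ((w:ℝ) ^ s.re * ((t:ℝ) + 1) ^ (-s.re)) := by
    have h0 : Summable fun t : ℕ => ((t:ℝ) + 1) ^ (1 - s.re) := by
      have h1 : Summable fun n : ℕ => (n:ℝ) ^ (1 - s.re) :=
        Real.summable_nat_rpow.2 (by linarith)
      have := h1.comp_injective (add_left_injective 1)
      refine this.congr fun t => ?_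
      simp only [Function.comp_apply]
      norm_cast
    refine (h0.mul_left ((w:ℝ) ^ s.re)).congr fun t => ?_
    have ht : (0:ℝ) < (t:ℝ) + 1 := by positivity
    rw [show (1 - s.re) = 1 + (-s.re) by ring, Real.rpow_add ht, Real.rpow_one]
    ring
  have hFnorm : Summable fun p : ℕ × ℕ => ‖F p‖ := by
    refine Summable.of_nonneg_of_le (fun _ => norm_nonneg _)
      (f := fun p : ℕ × ℕ => (fun t : ℕ => (w:ℝ) ^ s.re * ((t:ℝ) + 1) ^ (-s.re)) (p.1 + p.2)) ?_ ?_
    · intro p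
      have hb := hbase p
      rw [hFdef]
      simp only
      rw [norm_rcpow hb]
      have hle : ((p.1:ℝ) + p.2 + 1) / w ≤ 1 / (w:ℝ) * p.1 + 1 * p.2 + 1 := by
        rw [div_le_iff₀ hwR]
        have h1 : (0:ℝ) ≤ (p.2:ℝ) := by positivity
        have h2 : (0:ℝ) ≤ (p.1:ℝ) := by positivity
        have : 1 / (w:ℝ) * p.1 * w = p.1 := by field_simp
        nlinarith
      have hdiv : (0:ℝ) < ((p.1:ℝ) + p.2 + 1) / w := by positivity
      calc (1 / (w:ℝ) * p.1 + 1 * p.2 + 1) ^ (-s.re)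
          ≤ (((p.1:ℝ) + p.2 + 1) / w) ^ (-s.re) :=
            Real.rpow_le_rpow_of_nonpos hdiv hle (by linarith)
        _ = (w:ℝ) ^ s.re * ((((p.1 + p.2 : ℕ)) : ℝ) + 1) ^ (-s.re) := by
            rw [Real.div_rpow (by positivity) hwR.le, Real.rpow_neg hwR.le,
              div_eq_mul_inv, inv_inv]
            have hcast : ((p.1:ℝ) + p.2 + 1) = (((p.1 + p.2 : ℕ)) : ℝ) + 1 := by push_cast; ring
            rw [hcast, mul_comm]
    · exact summable_add_count (fun t => by positivity) hsum1σ
  have hF : Summable F := hFnorm.of_norm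
  -- reindexing equivalence
  set E : Fin w × (ℕ × ℕ) ≃ ℕ × ℕ :=
    (Equiv.prodAssoc (Fin w) ℕ ℕ).symm.trans
      ((Equiv.prodCongr (Equiv.prodComm (Fin w) ℕ) (Equiv.refl ℕ)).trans
        (Equiv.prodCongr (Nat.divModEquiv w).symm (Equiv.refl ℕ))) with hEdef
  have hEapp : ∀ (j : Fin w) (q n : ℕ), E (j, (q, n)) = (q * w + (j : ℕ), n) := by
    intro j q n
    simp [hEdef, Nat.divModEquiv, Equiv.prodAssoc, Equiv.prodComm, Equiv.prodCongr]
  set G : Fin w × (ℕ × ℕ) → ℂ :=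
    fun x => (((x.2.1 + x.2.2 : ℕ) + (1 + ((x.1 : ℕ) : ℝ) / w) : ℝ) : ℂ) ^ (-s) with hGdef
  have hFEG : F ∘ E = G := by
    funext x
    obtain ⟨j, q, n⟩ := x
    simp only [Function.comp_apply, hEapp, hFdef, hGdef]
    have hw0 : (w:ℝ) ≠ 0 := ne_of_gt hwR
    have key : (1 / (w:ℝ) * ((q * w + (j:ℕ) : ℕ):ℝ) + 1 * (n:ℕ) + 1 : ℝ)
        = (((q + n : ℕ) : ℝ) + (1 + ((j:ℕ):ℝ) / w) : ℝ) := by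
      push_cast
      field_simp
      ring
    rw [key]
  have hG : Summable G := hFEG ▸ E.summable_iff.2 hF
  have step1 : barnesZeta s (1 / w : ℝ) 1 1 = ∑' x : Fin w × (ℕ × ℕ), G x := by
    rw [barnesZeta, ← E.tsum_eq F, ← hFEG]
    rfl
  rw [step1, Summable.tsum_prod' hG (fun j => hG.prod_factor j), tsum_fintype]
  -- inner sum for fixed j
  have step2 : ∀ j : Fin w, (∑' p : ℕ × ℕ, G (j, p)) =
      hurwitzZetaSeries (s-1) (1 + ((j:ℕ):ℝ)/w) -
        (((((j:ℕ):ℝ)/w : ℝ) : ℂ)) * hurwitzZetaSeries s (1 + ((j:ℕ):ℝ)/w) := by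
    intro j
    set xj : ℝ := ((j:ℕ):ℝ)/w with hxj
    have hxj0 : 0 ≤ xj := by positivity
    have h1xj : (0:ℝ) < 1 + xj := by linarith
    have hGj : Summable fun p : ℕ × ℕ => G (j, p) := hG.prod_factor j
    have h2' : (∑' p : ℕ × ℕ, G (j, p)) =
        ∑' t : ℕ, ((t : ℂ) + 1) * (((t : ℕ) + (1 + xj) : ℝ) : ℂ) ^ (-s) :=
      tsum_add_count (g := fun t : ℕ => (((t : ℕ) + (1 + xj) : ℝ) : ℂ) ^ (-s)) hGj
    rw [h2']
    have hpt : ∀ t : ℕ, ((t : ℂ) + 1) * (((t : ℕ) + (1 + xj) : ℝ) : ℂ) ^ (-s) =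
        (((t : ℕ) + (1 + xj) : ℝ) : ℂ) ^ (-(s-1)) -
          ((xj : ℝ) : ℂ) * (((t : ℕ) + (1 + xj) : ℝ) : ℂ) ^ (-s) := by
      intro t
      set X : ℂ := (((t : ℕ) + (1 + xj) : ℝ) : ℂ) with hX
      have hXpos : (0:ℝ) < (t : ℝ) + (1 + xj) := by positivity
      have hXne : X ≠ 0 := by
        rw [hX]
        exact_mod_cast Complex.ofReal_ne_zero.2 hXpos.ne'
      have hXpow : X ^ (-(s-1)) = X * X ^ (-s) := by
        rw [show -(s-1) = 1 + (-s) by ring, Complex.cpow_add _ _ hXne, Complex.cpow_one]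
      have hcoef : (t : ℂ) + 1 = X - ((xj : ℝ) : ℂ) := by
        rw [hX]
        push_cast
        ring
      rw [hcoef, hXpow]
      ring
    rw [tsum_congr hpt, Summable.tsum_sub (summable_hzs hs1' h1xj)
      ((summable_hzs hs1 h1xj).mul_left _), tsum_mul_left]
    rfl
  rw [Finset.sum_congr rfl fun j _ => step2 j]
  rw [Finset.sum_sub_distrib]
  -- first sum: A's
  have stepA : ∑ j : Fin w, hurwitzZetaSeries (s-1) (1 + ((j:ℕ):ℝ)/w) =
      (riemannZeta (s-1) - ∑ j : Fin w, (((j : ℕ) : ℝ) : ℂ) ^ (-(s-1))) * (w:ℂ)^(s-1) := by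
    have hA : ∀ j : Fin w, hurwitzZetaSeries (s-1) (1 + ((j:ℕ):ℝ)/w) =
        (∑' t : ℕ, ((((t + 1) * w + (j : ℕ) : ℕ) : ℝ) : ℂ) ^ (-(s-1))) * (w:ℂ)^(s-1) := by
      intro j
      rw [hurwitzZetaSeries, ← tsum_mul_right]
      refine tsum_congr fun t => ?_
      have harg : ((t : ℝ) + (1 + ((j:ℕ):ℝ)/w)) = (((t + 1) * w + (j : ℕ) : ℕ) : ℝ) / w := by
        push_cast
        field_simp
        ring
      rw [harg, cpow_div_nat (by positivity) hw, neg_neg]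
    rw [Finset.sum_congr rfl fun j _ => hA j, ← Finset.sum_mul, sum_shifted w hw hs1']
  rw [stepA]
  -- second sum: B's
  have stepB : ∑ j : Fin w, (((((j:ℕ):ℝ)/w : ℝ) : ℂ)) * hurwitzZetaSeries s (1 + ((j:ℕ):ℝ)/w) =
      (∑ j : Fin w, (((((j:ℕ):ℝ)/w : ℝ) : ℂ)) * hurwitzZetaSeries s (((j:ℕ):ℝ)/w)) -
        (∑ j : Fin w, (((j : ℕ) : ℝ) : ℂ) ^ (-(s-1))) * (w:ℂ)^(s-1) := by
    rw [Finset.sum_mul, ← Finset.sum_sub_distrib]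
    refine Finset.sum_congr rfl fun j _ => ?_
    rcases Nat.eq_zero_or_pos (j : ℕ) with hj | hj
    · rw [hj]
      have hz0 : -(s-1) ≠ 0 := by
        intro h0
        have : s - 1 = 0 := by simpa using congrArg Neg.neg h0
        rw [this] at hs1'
        norm_num at hs1'
      simp only [Nat.cast_zero, zero_div, Complex.ofReal_zero, zero_mul,
        Complex.zero_cpow hz0]
      ring
    · have hjR : (0:ℝ) < ((j:ℕ):ℝ) := by exact_mod_cast hj
      have hxjpos : (0:ℝ) < ((j:ℕ):ℝ)/w := by positivity
      rw [hzs_shift hs1 hxjpos]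
      have hkey : (((((j:ℕ):ℝ)/w : ℝ) : ℂ)) * ((((j:ℕ):ℝ)/w : ℝ) : ℂ) ^ (-s) =
          (((j : ℕ) : ℝ) : ℂ) ^ (-(s-1)) * (w:ℂ)^(s-1) := by
        rw [cpow_div_nat hjR.le hw, neg_neg]
        have hcoe : (((((j:ℕ):ℝ)/w : ℝ) : ℂ)) = ((j:ℕ):ℂ) * ((w:ℂ))⁻¹ := by
          push_cast
          ring
        have hjC : ((j:ℕ):ℂ) ≠ 0 := Nat.cast_ne_zero.2 hj.ne'
        have hwC : ((w:ℕ):ℂ) ≠ 0 := Nat.cast_ne_zero.2 hw.ne'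
        have hj1 : ((j:ℕ):ℂ) * (((j : ℕ) : ℝ) : ℂ) ^ (-s) = (((j : ℕ) : ℝ) : ℂ) ^ (-(s-1)) := by
          rw [show -(s-1) = 1 + (-s) by ring, Complex.cpow_add _ _ (by exact_mod_cast hjC),
            Complex.cpow_one, Complex.ofReal_natCast]
        have hw1' : ((w:ℂ))⁻¹ * ((w:ℂ))^s = ((w:ℂ))^(s-1) := by
          rw [Complex.cpow_sub _ _ hwC, Complex.cpow_one]
          ring
        rw [hcoe]
        calc ((j:ℕ):ℂ) * ((w:ℂ))⁻¹ * ((((j:ℕ):ℝ):ℂ) ^ (-s) * ((w:ℂ)) ^ s)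
            = (((j:ℕ):ℂ) * ((((j:ℕ):ℝ):ℂ)) ^ (-s)) * (((w:ℂ))⁻¹ * ((w:ℂ))^s) := by ring
          _ = (((j : ℕ) : ℝ) : ℂ) ^ (-(s-1)) * (w:ℂ)^(s-1) := by rw [hj1, hw1']
      rw [mul_sub, hkey]
  rw [stepB]
  -- final rearrangement
  have stepE : ∑ j : Fin w, (((((j:ℕ):ℝ)/w : ℝ) : ℂ)) * hurwitzZetaSeries s (((j:ℕ):ℝ)/w) =
      (1 / w : ℂ) * ∑ j ∈ Finset.Icc 1 (w - 1), (j : ℂ) * hurwitzZetaSeries s ((j : ℝ) / w) := by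
    have hsub : Finset.Icc 1 (w-1) ⊆ Finset.range w := by
      intro x hx
      rw [Finset.mem_range]
      rw [Finset.mem_Icc] at hx
      omega
    have hzero : ∀ x ∈ Finset.range w, x ∉ Finset.Icc 1 (w-1) →
        ((((x:ℝ)/w : ℝ) : ℂ)) * hurwitzZetaSeries s ((x:ℝ)/w) = 0 := by
      intro x hx hnx
      have hx0 : x = 0 := by
        rw [Finset.mem_range] at hx
        rw [Finset.mem_Icc] at hnx
        omega
      simp [hx0]
    rw [Fin.sum_univ_eq_sum_range (fun j => ((((j:ℝ)/w : ℝ) : ℂ)) * hurwitzZetaSeries s ((j:ℝ)/w)) w,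
      ← Finset.sum_subset hsub hzero, Finset.mul_sum]
    refine Finset.sum_congr rfl fun j hj => ?_
    push_cast
    ring
  rw [stepE]
  ring
end

section
/- The Hurwitz zeta function satisfies ζ_H'(0; x) = log Γ(x) − (1/2) log(2π) for x > 0, where the derivative is with respect to s at s = 0 of the analytic continuation of ζ_H(s; x) = Σ_{m=0}^∞ (m + x)^{-s}. -/
open Filter Topology Set MeasureTheory intervalIntegral Finset

namespace LerchAux


/-- `(a + x) ^ w` for positive real `a + x`, written via `exp`. -/
noncomputable def P (x a : ℝ) (w : ℂ) : ℂ := Complex.exp (w * (Real.log (a + x) : ℂ))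

/-- Trapezoid-rule defect of `t ↦ (t+x)^(-s)` on `[a, a+1]`. -/
noncomputable def b (x a : ℝ) (s : ℂ) : ℂ :=
  (P x a (-s) + P x (a + 1) (-s)) / 2 - (P x (a + 1) (1 - s) - P x a (1 - s)) / (1 - s)

/-- The `s`-derivative of `b x a` at `s = 0`. -/
noncomputable def d (x a : ℝ) : ℝ :=
  (a + 1 + x) * Real.log (a + 1 + x) - (a + x) * Real.log (a + x) - 1
    - (Real.log (a + x) + Real.log (a + 1 + x)) / 2

/-- The analytic continuation of the Hurwitz zeta series to `re s > -1`. -/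
noncomputable def F (x : ℝ) (s : ℂ) : ℂ :=
  (∑' m : ℕ, b x (m : ℝ) s) + P x 0 (1 - s) / (s - 1) + P x 0 (-s) / 2


lemma norm_P {x a : ℝ} (h : 0 < a + x) (w : ℂ) : ‖P x a w‖ = (a + x) ^ w.re := by
  rw [P, Complex.norm_exp, Real.rpow_def_of_pos h]
  congr 1
  simp [Complex.mul_re, mul_comm]

lemma cpow_eq_P {x a : ℝ} (h : 0 < a + x) (w : ℂ) : ((a + x : ℝ) : ℂ) ^ w = P x a w := by
  rw [P, Complex.cpow_def_of_ne_zero (by exact_mod_cast h.ne'), ← Complex.ofReal_log h.le,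
    mul_comm]

lemma exp_ofReal_log {x a : ℝ} (h : 0 < a + x) :
    Complex.exp ((Real.log (a + x) : ℂ)) = ((a + x : ℝ) : ℂ) := by
  rw [← Complex.ofReal_exp, Real.exp_log h]

lemma P_w_hasDerivAt (x a : ℝ) (w₀ : ℂ) :
    HasDerivAt (fun w => P x a w) ((Real.log (a + x) : ℂ) * P x a w₀) w₀ := by
  have := ((hasDerivAt_id w₀).mul_const ((Real.log (a + x) : ℂ))).cexp
  simpa [P, mul_comm] using this

lemma P_t_hasDerivAt {x a : ℝ} (h : 0 < a + x) (w : ℂ) :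
    HasDerivAt (fun t => P x t w) (w * P x a (w - 1)) a := by
  have hlog : HasDerivAt (fun t : ℝ => Real.log (t + x)) (1 / (a + x)) a := by
    simpa [Function.comp_def] using (Real.hasDerivAt_log h.ne').comp a ((hasDerivAt_id a).add_const x)
  have hc : HasDerivAt (fun t : ℝ => (Real.log (t + x) : ℂ)) ((1 / (a + x) : ℝ) : ℂ) a :=
    hlog.ofReal_comp
  have h2 := (hc.const_mul w).cexp
  have h3 : (Complex.exp (w * (Real.log (a + x) : ℂ)) * (w * ((1 / (a + x) : ℝ) : ℂ)))
      = w * P x a (w - 1) := by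
    rw [P, sub_one_mul, Complex.exp_sub, exp_ofReal_log h]
    push_cast
    field_simp
  rw [← h3]
  exact h2

lemma P_t_continuousOn (x : ℝ) (w : ℂ) :
    ContinuousOn (fun t => P x t w) {t : ℝ | 0 < t + x} := fun t ht =>
  ((P_t_hasDerivAt ht w).continuousAt).continuousWithinAt

lemma b_eq_integral {x a : ℝ} (ha : 0 < a + x) {s : ℂ} (hs : s ≠ 1) :
    b x a s = s * (s + 1) *
      ∫ t in a..(a + 1), (((t - a) * (a + 1 - t) / 2 : ℝ) : ℂ) * P x t (-s - 2) := by
  have hle : a ≤ a + 1 := by linarith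
  have huIcc : uIcc a (a + 1) = Icc a (a + 1) := uIcc_of_le hle
  have htx : ∀ t ∈ uIcc a (a + 1), 0 < t + x := by
    intro t ht; rw [huIcc] at ht; have := ht.1; linarith
  have hsub : uIcc a (a + 1) ⊆ {t : ℝ | 0 < t + x} := fun t ht => htx t ht
  have hone : (1 : ℂ) - s ≠ 0 := sub_ne_zero_of_ne (Ne.symm hs)
  -- the three functions
  set u : ℝ → ℂ := fun t => (((t - a) * (a + 1 - t) / 2 : ℝ) : ℂ) with hu_def
  set u' : ℝ → ℂ := fun t => ((a + 1 / 2 - t : ℝ) : ℂ) with hu'_def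
  set v : ℝ → ℂ := fun t => -s * P x t (-s - 1) with hv_def
  set v' : ℝ → ℂ := fun t => s * (s + 1) * P x t (-s - 2) with hv'_def
  set w : ℝ → ℂ := fun t => P x t (-s) with hw_def
  have hu : ∀ t ∈ uIcc a (a + 1), HasDerivAt u (u' t) t := by
    intro t _
    have h1 : HasDerivAt (fun t : ℝ => (t - a) * (a + 1 - t) / 2) (a + 1 / 2 - t) t := by
      have := (((hasDerivAt_id t).sub_const a).mul
        ((hasDerivAt_const t (a + 1)).sub (hasDerivAt_id t))).div_const 2
      simp only [id] at this
      exact this.congr_deriv (by simp only [Pi.sub_apply, id]; ring)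
    exact h1.ofReal_comp
  have hu' : ∀ t ∈ uIcc a (a + 1), HasDerivAt u' ((-1 : ℝ) : ℂ) t := by
    intro t _
    have h1 : HasDerivAt (fun t : ℝ => a + 1 / 2 - t) (-1) t := by
      exact ((hasDerivAt_const t (a + 1 / 2)).sub (hasDerivAt_id t)).congr_deriv (by ring)
    exact h1.ofReal_comp
  have hv : ∀ t ∈ uIcc a (a + 1), HasDerivAt v (v' t) t := by
    intro t ht
    have := (P_t_hasDerivAt (htx t ht) (-s - 1)).const_mul (-s)
    have harg : (-s - 1 - 1) = -s - 2 := by ring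
    rw [harg] at this
    exact this.congr_deriv (by ring)
  have hw : ∀ t ∈ uIcc a (a + 1), HasDerivAt w (v t) t := by
    intro t ht
    have := P_t_hasDerivAt (htx t ht) (-s)
    have harg : (-s - 1) = -s - 1 := rfl
    exact this
  have hPint : ∀ w₀ : ℂ, IntervalIntegrable (fun t => P x t w₀) volume a (a + 1) :=
    fun w₀ => ((P_t_continuousOn x w₀).mono hsub).intervalIntegrable
  have hv'int : IntervalIntegrable v' volume a (a + 1) :=
    (continuousOn_const.mul ((P_t_continuousOn x (-s - 2)).mono hsub)).intervalIntegrable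
  have hvint : IntervalIntegrable v volume a (a + 1) :=
    (continuousOn_const.mul ((P_t_continuousOn x (-s - 1)).mono hsub)).intervalIntegrable
  have hu'int : IntervalIntegrable u' volume a (a + 1) :=
    (Continuous.intervalIntegrable (by continuity) a (a + 1))
  have hconstint : IntervalIntegrable (fun _ : ℝ => ((-1 : ℝ) : ℂ)) volume a (a + 1) :=
    intervalIntegrable_const
  -- FTC
  have hftc : ∫ t in a..(a + 1), w t = (P x (a + 1) (1 - s) - P x a (1 - s)) / (1 - s) := by
    have had : ∀ t ∈ uIcc a (a + 1), HasDerivAt (fun t => P x t (1 - s) / (1 - s)) (w t) t := by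
      intro t ht
      have := (P_t_hasDerivAt (htx t ht) (1 - s)).div_const (1 - s)
      have harg : (1 : ℂ) - s - 1 = -s := by ring
      rw [harg] at this
      rw [mul_div_cancel_left₀ _ hone] at this
      exact this
    rw [integral_eq_sub_of_hasDerivAt had (hPint (-s))]
    ring
  -- first integration by parts
  have hibp1 : ∫ t in a..(a + 1), u t * v' t
      = u (a + 1) * v (a + 1) - u a * v a - ∫ t in a..(a + 1), u' t * v t :=
    integral_mul_deriv_eq_deriv_mul hu hv hu'int hv'int
  -- second integration by parts
  have hibp2 : ∫ t in a..(a + 1), u' t * v t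
      = u' (a + 1) * w (a + 1) - u' a * w a - ∫ t in a..(a + 1), ((-1 : ℝ) : ℂ) * w t :=
    integral_mul_deriv_eq_deriv_mul hu' hw hconstint hvint
  have hnegint : ∫ t in a..(a + 1), ((-1 : ℝ) : ℂ) * w t = -∫ t in a..(a + 1), w t := by
    rw [intervalIntegral.integral_const_mul]; push_cast; ring
  have hua : u a = 0 := by simp [hu_def]
  have hua1 : u (a + 1) = 0 := by simp [hu_def]
  have hu'a : u' a = ((1 / 2 : ℝ) : ℂ) := by norm_num [hu'_def]
  have hu'a1 : u' (a + 1) = ((-(1 / 2) : ℝ) : ℂ) := by norm_num [hu'_def]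
  have hpull : ∫ t in a..(a + 1), u t * v' t
      = s * (s + 1) * ∫ t in a..(a + 1), u t * P x t (-s - 2) := by
    rw [← intervalIntegral.integral_const_mul]
    congr 1
    funext t
    show u t * (s * (s + 1) * P x t (-s - 2)) = s * (s + 1) * (u t * P x t (-s - 2))
    ring
  rw [← hpull, hibp1, hibp2, hnegint, hftc, hua, hua1, hu'a, hu'a1]
  show b x a s = 0 * _ - 0 * _ - (((-(1/2) : ℝ) : ℂ) * P x (a+1) (-s) - ((1/2 : ℝ) : ℂ) * P x a (-s)
    - -((P x (a + 1) (1 - s) - P x a (1 - s)) / (1 - s)))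
  rw [b]
  push_cast
  ring

lemma norm_b_le {x a : ℝ} (ha : 0 < a + x) {s : ℂ} (hs : s ≠ 1) (h2 : -2 ≤ s.re) :
    ‖b x a s‖ ≤ ‖s‖ * ‖s + 1‖ * (a + x) ^ (-s.re - 2) := by
  rw [b_eq_integral ha hs, norm_mul, norm_mul]
  refine mul_le_mul_of_nonneg_left ?_ (mul_nonneg (norm_nonneg s) (norm_nonneg _))
  have hle : a ≤ a + 1 := by linarith
  have key : ‖∫ t in a..(a + 1), (((t - a) * (a + 1 - t) / 2 : ℝ) : ℂ) * P x t (-s - 2)‖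
      ≤ (a + x) ^ (-s.re - 2) * |a + 1 - a| := by
    apply intervalIntegral.norm_integral_le_of_norm_le_const
    intro t ht
    rw [uIoc_of_le hle] at ht
    obtain ⟨ht1, ht2⟩ := ht
    have htx : 0 < t + x := by linarith
    rw [norm_mul, Complex.norm_real, Real.norm_eq_abs, norm_P htx]
    have habs : |(t - a) * (a + 1 - t) / 2| ≤ 1 := by
      rw [abs_le]; constructor <;> nlinarith
    have hre : (-s - 2).re = -s.re - 2 := by simp
    rw [hre]
    have hrp : (t + x) ^ (-s.re - 2) ≤ (a + x) ^ (-s.re - 2) :=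
      Real.rpow_le_rpow_of_nonpos ha (by linarith) (by linarith)
    calc |(t - a) * (a + 1 - t) / 2| * (t + x) ^ (-s.re - 2)
        ≤ 1 * ((a + x) ^ (-s.re - 2)) := by
          apply mul_le_mul habs hrp (Real.rpow_nonneg (by linarith) _) one_pos.le
      _ = (a + x) ^ (-s.re - 2) := one_mul _
  simpa using key

lemma summable_rpow {x : ℝ} (hx : 0 < x) {c : ℝ} (hc : c < -1) :
    Summable (fun m : ℕ => ((m : ℝ) + x) ^ c) := by
  have h := (Real.summable_one_div_nat_add_rpow x (-c)).mpr (by linarith)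
  refine h.congr fun m => ?_
  have hm : (0 : ℝ) < (m : ℝ) + x := by positivity
  rw [abs_of_pos hm, one_div, ← Real.rpow_neg hm.le, neg_neg]

lemma rpow_le_add {y c c₁ c₂ : ℝ} (hy : 0 < y) (h1 : c₁ ≤ c) (h2 : c ≤ c₂) :
    y ^ c ≤ y ^ c₁ + y ^ c₂ := by
  rcases le_total 1 y with h | h
  · have := Real.rpow_le_rpow_of_exponent_le h h2
    have h0 : (0:ℝ) ≤ y ^ c₁ := Real.rpow_nonneg hy.le _
    linarith
  · have := Real.rpow_le_rpow_of_exponent_ge hy h h1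
    have h0 : (0:ℝ) ≤ y ^ c₂ := Real.rpow_nonneg hy.le _
    linarith

lemma P_one {x a : ℝ} (h : 0 < a + x) : P x a 1 = ((a + x : ℝ) : ℂ) := by
  rw [P, one_mul, exp_ofReal_log h]

lemma b_differentiableAt (x a : ℝ) {s : ℂ} (hs : s ≠ 1) :
    DifferentiableAt ℂ (fun z => b x a z) s := by
  have hone : (1 : ℂ) - s ≠ 0 := sub_ne_zero_of_ne (Ne.symm hs)
  have d1 : ∀ c : ℝ, Differentiable ℂ (fun z : ℂ => P x c (-z)) := fun c =>
    (differentiable_id.neg.mul_const _).cexp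
  have d2 : ∀ c : ℝ, Differentiable ℂ (fun z : ℂ => P x c (1 - z)) := fun c =>
    (((differentiable_const _).sub differentiable_id).mul_const _).cexp
  exact (((d1 a).differentiableAt.add (d1 (a+1)).differentiableAt).div_const 2).sub
    ((((d2 (a+1)).differentiableAt.sub (d2 a).differentiableAt)).div
      (((differentiable_const (1:ℂ)).sub differentiable_id).differentiableAt) hone)

lemma b_hasDerivAt_zero {x a : ℝ} (ha : 0 < a + x) :
    HasDerivAt (fun z => b x a z) ((d x a : ℝ) : ℂ) 0 := by
  have ha1 : 0 < a + 1 + x := by linarith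
  have ha1' : 0 < (a + 1) + x := by linarith
  set A : ℂ := (Real.log (a + x) : ℂ) with hA
  set B : ℂ := (Real.log ((a + 1) + x) : ℂ) with hB
  have h1 : HasDerivAt (fun z : ℂ => P x a (-z)) (-A) 0 := by
    have := ((hasDerivAt_id (0:ℂ)).neg.mul_const A).cexp
    simpa [P] using this
  have h2 : HasDerivAt (fun z : ℂ => P x (a + 1) (-z)) (-B) 0 := by
    have := ((hasDerivAt_id (0:ℂ)).neg.mul_const B).cexp
    simpa [P] using this
  have h3 : HasDerivAt (fun z : ℂ => P x a (1 - z)) (-(((a + x : ℝ) : ℂ) * A)) 0 := by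
    have := (((hasDerivAt_const (0:ℂ) (1:ℂ)).sub (hasDerivAt_id 0)).mul_const A).cexp
    simp only [sub_zero, one_mul, zero_sub, neg_one_mul] at this
    have he : Complex.exp A = ((a + x : ℝ) : ℂ) := exp_ofReal_log ha
    simpa [P, he, mul_comm] using this
  have h4 : HasDerivAt (fun z : ℂ => P x (a + 1) (1 - z)) (-((((a + 1) + x : ℝ) : ℂ) * B)) 0 := by
    have := (((hasDerivAt_const (0:ℂ) (1:ℂ)).sub (hasDerivAt_id 0)).mul_const B).cexp
    simp only [sub_zero, one_mul, zero_sub, neg_one_mul] at this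
    have he : Complex.exp B = (((a + 1) + x : ℝ) : ℂ) := exp_ofReal_log ha1'
    simpa [P, he, mul_comm] using this
  have hnum : HasDerivAt (fun z : ℂ => P x (a + 1) (1 - z) - P x a (1 - z))
      (-((((a + 1) + x : ℝ) : ℂ) * B) - -(((a + x : ℝ) : ℂ) * A)) 0 := h4.sub h3
  have hden : HasDerivAt (fun z : ℂ => 1 - z) (-1) 0 := by
    exact ((hasDerivAt_const (0:ℂ) (1:ℂ)).sub (hasDerivAt_id 0)).congr_deriv (by ring)
  have hden0 : (fun z : ℂ => 1 - z) 0 ≠ 0 := by norm_num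
  have hq := hnum.div hden hden0
  have hb := ((h1.add h2).div_const 2).sub hq
  have hval1 : P x (a + 1) ((1:ℂ) - 0) = (((a + 1) + x : ℝ) : ℂ) := by
    rw [sub_zero, P_one ha1']
  have hval2 : P x a ((1:ℂ) - 0) = ((a + x : ℝ) : ℂ) := by
    rw [sub_zero, P_one ha]
  rw [hval1, hval2] at hb
  refine hb.congr_deriv (Eq.symm ?_)
  simp only [sub_zero, hA, hB, d]
  push_cast
  have : ((a:ℂ) + 1 + x) = ((a + 1 : ℝ) : ℂ) + (x:ℂ) := by push_cast; ring
  field_simp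
  ring

lemma sum_d (x : ℝ) (N : ℕ) :
    ∑ m ∈ range N, d x (m : ℝ)
      = ((N : ℝ) + x) * Real.log ((N : ℝ) + x) - x * Real.log x - N
        - (∑ m ∈ range (N + 1), Real.log ((m : ℝ) + x))
        + (Real.log x + Real.log ((N : ℝ) + x)) / 2 := by
  induction N with
  | zero => simp
  | succ N ih =>
    rw [Finset.sum_range_succ, ih, Finset.sum_range_succ (n := N + 1)]
    simp only [d]
    push_cast
    ring

lemma log_factorial_eq (N : ℕ) (hN : 1 ≤ N) :
    Real.log ((Nat.factorial N)) = Real.log (Stirling.stirlingSeq N) + (Real.log 2 + Real.log N) / 2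
      + N * (Real.log N - 1) := by
  have hNpos : (0 : ℝ) < N := by exact_mod_cast hN
  have hfac : (0 : ℝ) < ((Nat.factorial N) : ℝ) := by exact_mod_cast Nat.factorial_pos N
  have hsq : (0 : ℝ) < Real.sqrt (2 * N) := Real.sqrt_pos.mpr (by positivity)
  have hpow : (0 : ℝ) < ((N : ℝ) / Real.exp 1) ^ N := by positivity
  rw [Stirling.stirlingSeq]
  rw [Real.log_div hfac.ne' (by positivity), Real.log_mul hsq.ne' hpow.ne',
    Real.log_sqrt (by positivity), Real.log_mul two_ne_zero hNpos.ne',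
    Real.log_pow, Real.log_div hNpos.ne' (Real.exp_pos 1).ne', Real.log_exp]
  push_cast
  ring

lemma sum_d_eq (x : ℝ) (hx : 0 < x) (N : ℕ) (hN : 1 ≤ N) :
    ∑ m ∈ range N, d x (m : ℝ)
      = ((N : ℝ) + x + 1/2) * Real.log (1 + x / (N : ℝ)) - Real.log 2 / 2
        - Real.log (Stirling.stirlingSeq N) + Real.BohrMollerup.logGammaSeq x N
        - x * Real.log x + Real.log x / 2 := by
  have hNpos : (0 : ℝ) < N := by exact_mod_cast hN
  have h1 : ∑ m ∈ range (N + 1), Real.log ((m : ℝ) + x)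
      = x * Real.log N + Real.log ((Nat.factorial N)) - Real.BohrMollerup.logGammaSeq x N := by
    rw [Real.BohrMollerup.logGammaSeq]
    have : ∑ m ∈ range (N + 1), Real.log (x + (m : ℝ))
        = ∑ m ∈ range (N + 1), Real.log ((m : ℝ) + x) :=
      Finset.sum_congr rfl fun m _ => by rw [add_comm]
    rw [this]
    ring
  have h3 : Real.log (1 + x / (N : ℝ)) = Real.log ((N : ℝ) + x) - Real.log N := by
    rw [show (1 + x / (N : ℝ)) = ((N : ℝ) + x) / (N : ℝ) by field_simp,
      Real.log_div (by positivity) hNpos.ne']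
  rw [sum_d, h1, log_factorial_eq N hN, h3]
  ring

lemma tendsto_sum_d (x : ℝ) (hx : 0 < x) :
    Tendsto (fun N : ℕ => ∑ m ∈ range N, d x (m : ℝ)) atTop
      (𝓝 (Real.log (Real.Gamma x) + x - Real.log (2 * Real.pi) / 2
          - x * Real.log x + Real.log x / 2)) := by
  have hdiv : Tendsto (fun N : ℕ => x / (N : ℝ)) atTop (𝓝 0) :=
    Tendsto.div_atTop tendsto_const_nhds tendsto_natCast_atTop_atTop
  have hone : Tendsto (fun N : ℕ => 1 + x / (N : ℝ)) atTop (𝓝 1) := by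
    have := hdiv.const_add 1
    simpa using this
  have hlog0 : Tendsto (fun N : ℕ => Real.log (1 + x / (N : ℝ))) atTop (𝓝 0) := by
    have := (Real.continuousAt_log one_ne_zero).tendsto.comp hone
    simpa [Real.log_one, Function.comp_def] using this
  have hT1a : Tendsto (fun N : ℕ => (N : ℝ) * Real.log (1 + x / (N : ℝ))) atTop (𝓝 x) :=
    (Real.tendsto_mul_log_one_add_div_atTop x).comp tendsto_natCast_atTop_atTop
  have hT1 : Tendsto (fun N : ℕ => ((N : ℝ) + x + 1/2) * Real.log (1 + x / (N : ℝ)))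
      atTop (𝓝 x) := by
    have h2 := hlog0.const_mul (x + 1/2)
    have h3 := hT1a.add h2
    simp only [mul_zero, add_zero] at h3
    exact h3.congr fun N => by ring
  have hT3 : Tendsto (fun N : ℕ => Real.log (Stirling.stirlingSeq N)) atTop
      (𝓝 (Real.log Real.pi / 2)) := by
    have hsp : Real.sqrt Real.pi ≠ 0 := (Real.sqrt_pos.mpr Real.pi_pos).ne'
    have := (Real.continuousAt_log hsp).tendsto.comp Stirling.tendsto_stirlingSeq_sqrt_pi
    rw [Real.log_sqrt Real.pi_pos.le] at this
    exact this
  have hT4 := Real.BohrMollerup.tendsto_log_gamma hx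
  have H := ((((hT1.sub_const (Real.log 2 / 2)).sub hT3).add hT4).sub_const
    (x * Real.log x)).add_const (Real.log x / 2)
  have heq : ∀ᶠ N : ℕ in atTop,
      ((N : ℝ) + x + 1/2) * Real.log (1 + x / (N : ℝ)) - Real.log 2 / 2
        - Real.log (Stirling.stirlingSeq N) + Real.BohrMollerup.logGammaSeq x N
        - x * Real.log x + Real.log x / 2 = ∑ m ∈ range N, d x (m : ℝ) := by
    filter_upwards [eventually_ge_atTop 1] with N hN
    exact (sum_d_eq x hx N hN).symm
  have hval : x - Real.log 2 / 2 - Real.log Real.pi / 2 + Real.log (Real.Gamma x)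
        - x * Real.log x + Real.log x / 2
      = Real.log (Real.Gamma x) + x - Real.log (2 * Real.pi) / 2
        - x * Real.log x + Real.log x / 2 := by
    rw [Real.log_mul two_ne_zero Real.pi_ne_zero]
    ring
  rw [← hval]
  exact H.congr' heq

lemma hpos {x : ℝ} (hx : 0 < x) (m : ℕ) : 0 < (m : ℝ) + x := by positivity

lemma cast_succ {x : ℝ} (m : ℕ) (w : ℂ) : P x ((m : ℝ) + 1) w = P x ((m + 1 : ℕ) : ℝ) w := by
  push_cast; ring_nf

lemma summable_b {x : ℝ} (hx : 0 < x) {s : ℂ} (hs : s ≠ 1) (hre : -1 < s.re) :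
    Summable (fun m : ℕ => b x (m : ℝ) s) := by
  refine Summable.of_norm_bounded (((summable_rpow hx (c := -s.re - 2) (by linarith)).mul_left
    (‖s‖ * ‖s + 1‖))) fun m => ?_
  simpa [mul_assoc] using norm_b_le (hpos hx m) hs (by linarith)

lemma F_eq_series {x : ℝ} (hx : 0 < x) {s : ℂ} (hre : 1 < s.re) : F x s = hurwitzZetaSeries s x := by
  have hs : s ≠ 1 := fun h => by rw [h] at hre; simp at hre
  have hone : (1 : ℂ) - s ≠ 0 := sub_ne_zero_of_ne (Ne.symm hs)
  set G : ℕ → ℂ := fun m => P x (m : ℝ) (-s) with hG_def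
  have hnormG : ∀ m : ℕ, ‖G m‖ = ((m : ℝ) + x) ^ (-s.re) := by
    intro m
    rw [hG_def]
    have := norm_P (hpos hx m) (-s)
    simpa using this
  have hG : Summable G := by
    refine Summable.of_norm ?_
    refine (summable_rpow hx (c := -s.re) (by linarith)).congr fun m => ?_
    rw [hnormG]
  have hG1 : Summable (fun m : ℕ => G (m + 1)) := by
    rw [summable_nat_add_iff]; exact hG
  have hb : Summable (fun m : ℕ => b x (m : ℝ) s) := summable_b hx hs (by linarith)
  set E : ℕ → ℂ := fun m => P x (m : ℝ) (1 - s) with hE_def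
  have hbid : ∀ m : ℕ, b x (m : ℝ) s = (G m + G (m + 1)) / 2 - (E (m + 1) - E m) / (1 - s) := by
    intro m
    rw [b, hG_def, hE_def]
    simp only
    rw [cast_succ, cast_succ]
  have hE : Summable (fun m : ℕ => E (m + 1) - E m) := by
    have h1 : Summable (fun m : ℕ => ((G m + G (m + 1)) / 2 - b x (m : ℝ) s) * (1 - s)) :=
      (((hG.add hG1).div_const 2).sub hb).mul_right (1 - s)
    refine h1.congr fun m => ?_
    rw [hbid m]
    have h2 : (G m + G (m + 1)) / 2 - ((G m + G (m + 1)) / 2 - (E (m + 1) - E m) / (1 - s))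
        = (E (m + 1) - E m) / (1 - s) := by ring
    rw [h2, div_mul_cancel₀ _ hone]
  have htel : ∀ N : ℕ, ∑ m ∈ range N, (E (m + 1) - E m) = E N - E 0 :=
    fun N => Finset.sum_range_sub E N
  have hPN : Tendsto (fun N : ℕ => E N) atTop (𝓝 0) := by
    rw [tendsto_zero_iff_norm_tendsto_zero]
    have hc : (1 - s).re < 0 := by simp [Complex.sub_re]; linarith
    have h1 : Tendsto (fun y : ℝ => y ^ ((1 - s).re)) atTop (𝓝 0) := by
      have := tendsto_rpow_neg_atTop (y := -(1 - s).re) (by linarith)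
      simpa using this
    have h2 : Tendsto (fun N : ℕ => (N : ℝ) + x) atTop atTop :=
      tendsto_atTop_add_const_right atTop x tendsto_natCast_atTop_atTop
    have := h1.comp h2
    refine this.congr fun N => ?_
    simp only [Function.comp_apply, hE_def]
    rw [norm_P (hpos hx N)]
  have hEsum : ∑' m : ℕ, (E (m + 1) - E m) = -E 0 := by
    have h1 : Tendsto (fun N : ℕ => ∑ m ∈ range N, (E (m + 1) - E m)) atTop
        (𝓝 (∑' m : ℕ, (E (m + 1) - E m))) := hE.hasSum.tendsto_sum_nat
    have h2 : Tendsto (fun N : ℕ => ∑ m ∈ range N, (E (m + 1) - E m)) atTop (𝓝 (-E 0)) := by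
      simp_rw [htel]
      simpa using hPN.sub_const (E 0)
    exact tendsto_nhds_unique h1 h2
  have hT : ∑' m : ℕ, b x (m : ℝ) s
      = (∑' m : ℕ, G m) - G 0 / 2 + E 0 / (1 - s) := by
    have h1 : ∑' m : ℕ, b x (m : ℝ) s
        = ∑' m : ℕ, ((G m + G (m + 1)) / 2 - (E (m + 1) - E m) / (1 - s)) :=
      tsum_congr hbid
    rw [h1, Summable.tsum_sub (((hG.add hG1).div_const 2)) (hE.div_const (1 - s)),
      tsum_div_const, tsum_div_const, Summable.tsum_add hG hG1, hEsum]
    have hshift : ∑' m : ℕ, G (m + 1) = (∑' m : ℕ, G m) - G 0 := by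
      rw [Summable.tsum_eq_zero_add hG]; ring
    rw [hshift]
    field_simp
    ring
  rw [F, hT, hurwitzZetaSeries]
  have hser : ∑' (m : ℕ), ((m + x : ℝ) : ℂ) ^ (-s) = ∑' m : ℕ, G m :=
    tsum_congr fun m => cpow_eq_P (hpos hx m) (-s)
  rw [hser]
  have hz : E 0 / (1 - s) + P x 0 (1 - s) / (s - 1) = 0 := by
    have hE0 : E 0 = P x 0 (1 - s) := by rw [hE_def]; norm_num
    rw [hE0, div_add_div _ _ hone (sub_ne_zero_of_ne hs)]
    have hnum : P x 0 (1 - s) * (s - 1) + (1 - s) * P x 0 (1 - s) = 0 := by ring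
    rw [hnum, zero_div]
  have hG0 : G 0 = P x 0 (-s) := by rw [hG_def]; norm_num
  rw [← hG0]
  linear_combination hz



/-- The region of analytic continuation. -/
def V : Set ℂ := {s : ℂ | -1 < s.re ∧ s ≠ 1}

lemma V_open : IsOpen V := by
  have h1 : IsOpen {s : ℂ | -1 < s.re} := isOpen_lt continuous_const Complex.continuous_re
  have h2 : IsOpen {s : ℂ | s ≠ 1} := isOpen_compl_singleton
  exact h1.inter h2

lemma V_preconnected : IsPreconnected V := by
  set C1 : Set ℂ := {s : ℂ | -1 < s.re} ∩ {s : ℂ | s.re < 1} with hC1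
  set C2 : Set ℂ := {s : ℂ | -1 < s.re} ∩ {s : ℂ | 0 < s.im} with hC2
  set C3 : Set ℂ := {s : ℂ | -1 < s.re} ∩ {s : ℂ | s.im < 0} with hC3
  set C4 : Set ℂ := {s : ℂ | 1 < s.re} with hC4
  have p1 : IsPreconnected C1 :=
    ((convex_halfSpace_re_gt (-1)).inter (convex_halfSpace_re_lt 1)).isPreconnected
  have p2 : IsPreconnected C2 :=
    ((convex_halfSpace_re_gt (-1)).inter (convex_halfSpace_im_gt 0)).isPreconnected
  have p3 : IsPreconnected C3 :=
    ((convex_halfSpace_re_gt (-1)).inter (convex_halfSpace_im_lt 0)).isPreconnected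
  have p4 : IsPreconnected C4 := (convex_halfSpace_re_gt 1).isPreconnected
  have h12 : IsPreconnected (C1 ∪ C2) := by
    apply IsPreconnected.union (Complex.I / 2)
    · constructor <;> simp [hC1]
    · constructor <;> simp [hC2]
    · exact p1
    · exact p2
  have h123 : IsPreconnected (C1 ∪ C2 ∪ C3) := by
    apply IsPreconnected.union (-(Complex.I / 2))
    · left; constructor <;> simp [hC1]
    · constructor <;> simp [hC3]
    · exact h12
    · exact p3
  have h1234 : IsPreconnected (C1 ∪ C2 ∪ C3 ∪ C4) := by
    apply IsPreconnected.union (2 + Complex.I)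
    · left; right
      refine ⟨?_, ?_⟩ <;>
        norm_num [hC2, Set.mem_setOf_eq, Complex.add_re, Complex.add_im]
    · norm_num [hC4, Set.mem_setOf_eq, Complex.add_re]
    · exact h123
    · exact p4
  have hV : V = C1 ∪ C2 ∪ C3 ∪ C4 := by
    ext s
    simp only [V, hC1, hC2, hC3, hC4, mem_union, mem_inter_iff, mem_setOf_eq]
    constructor
    · rintro ⟨hre, hne⟩
      rcases lt_trichotomy s.im 0 with him | him | him
      · exact Or.inl (Or.inr ⟨hre, him⟩)
      · rcases lt_trichotomy s.re 1 with h | h | h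
        · exact Or.inl (Or.inl (Or.inl ⟨hre, h⟩))
        · exact absurd (Complex.ext h him) hne
        · exact Or.inr h
      · exact Or.inl (Or.inl (Or.inr ⟨hre, him⟩))
    · rintro (((⟨h1, h2⟩ | ⟨h1, h2⟩) | ⟨h1, h2⟩) | h)
      · exact ⟨h1, fun he => by rw [he] at h2; simp at h2⟩
      · exact ⟨h1, fun he => by rw [he] at h2; simp at h2⟩
      · exact ⟨h1, fun he => by rw [he] at h2; simp at h2⟩
      · refine ⟨by linarith, fun he => by rw [he] at h; simp at h⟩
  rw [hV]
  exact h1234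

/-- Uniform bound machinery: on a ball inside `V`, the series of `b` has a summable
uniform bound. -/
lemma b_bound_on_ball {x : ℝ} (hx : 0 < x) {s₀ : ℂ} {r σ₁ σ₂ R : ℝ}
    (hr : 0 < r) (hσ₁ : -1 < σ₁)
    (hball : ∀ s ∈ Metric.ball s₀ r, σ₁ ≤ s.re ∧ s.re ≤ σ₂ ∧ s ≠ 1 ∧ ‖s‖ ≤ R) :
    (Summable fun m : ℕ => R * (R + 1) *
        (((m : ℝ) + x) ^ (-σ₁ - 2) + ((m : ℝ) + x) ^ (-σ₂ - 2))) ∧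
      ∀ (m : ℕ), ∀ s ∈ Metric.ball s₀ r, ‖b x (m : ℝ) s‖ ≤ R * (R + 1) *
        (((m : ℝ) + x) ^ (-σ₁ - 2) + ((m : ℝ) + x) ^ (-σ₂ - 2)) := by
  have hσ12 : σ₁ ≤ σ₂ := by
    have hmem : s₀ ∈ Metric.ball s₀ r := Metric.mem_ball_self hr
    have := hball s₀ hmem
    linarith [this.1, this.2.1]
  constructor
  · exact ((summable_rpow hx (by linarith)).add (summable_rpow hx (by linarith))).mul_left _
  · intro m s hs
    obtain ⟨h1, h2, h3, h4⟩ := hball s hs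
    have hR0 : 0 ≤ R := le_trans (norm_nonneg s) h4
    have hb := norm_b_le (hpos hx m) h3 (by linarith)
    refine hb.trans ?_
    have hs1 : ‖s + 1‖ ≤ R + 1 := by
      calc ‖s + 1‖ ≤ ‖s‖ + ‖(1 : ℂ)‖ := norm_add_le s 1
        _ ≤ R + 1 := by rw [norm_one]; linarith
    have hrp : ((m : ℝ) + x) ^ (-s.re - 2)
        ≤ ((m : ℝ) + x) ^ (-σ₁ - 2) + ((m : ℝ) + x) ^ (-σ₂ - 2) := by
      have := rpow_le_add (c := -s.re - 2) (c₁ := -σ₂ - 2) (c₂ := -σ₁ - 2)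
        (hpos hx m) (by linarith) (by linarith)
      linarith
    calc ‖s‖ * ‖s + 1‖ * ((m : ℝ) + x) ^ (-s.re - 2)
        ≤ R * (R + 1) * (((m : ℝ) + x) ^ (-σ₁ - 2) + ((m : ℝ) + x) ^ (-σ₂ - 2)) := by
          apply mul_le_mul
          · exact mul_le_mul h4 hs1 (norm_nonneg _) hR0
          · exact hrp
          · positivity
          · positivity

lemma T_differentiableOn {x : ℝ} (hx : 0 < x) :
    DifferentiableOn ℂ (fun s => ∑' m : ℕ, b x (m : ℝ) s) V := by
  intro s₀ hs₀
  obtain ⟨hre, hne⟩ := hs₀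
  set r : ℝ := min ((s₀.re + 1) / 2) (dist s₀ 1 / 2) with hr_def
  have hd1 : 0 < dist s₀ 1 := dist_pos.mpr hne
  have hr : 0 < r := lt_min (by linarith) (by linarith)
  have hball : ∀ s ∈ Metric.ball s₀ r,
      (s₀.re - 1) / 2 ≤ s.re ∧ s.re ≤ s₀.re + r ∧ s ≠ 1 ∧ ‖s‖ ≤ ‖s₀‖ + r := by
    intro s hs
    rw [Metric.mem_ball] at hs
    have hdist : ‖s - s₀‖ < r := by rwa [← dist_eq_norm]
    have hrele : |(s - s₀).re| ≤ ‖s - s₀‖ := Complex.abs_re_le_norm _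
    have hre' : |s.re - s₀.re| < r := by
      rw [← Complex.sub_re]; exact lt_of_le_of_lt hrele hdist
    rw [abs_lt] at hre'
    have hrle : r ≤ (s₀.re + 1) / 2 := min_le_left _ _
    have hrle2 : r ≤ dist s₀ 1 / 2 := min_le_right _ _
    refine ⟨by linarith, by linarith, ?_, ?_⟩
    · intro h
      rw [h] at hs
      have : dist (1 : ℂ) s₀ = dist s₀ 1 := dist_comm _ _
      rw [this] at hs
      linarith
    · calc ‖s‖ = ‖s₀ + (s - s₀)‖ := by ring_nf
        _ ≤ ‖s₀‖ + ‖s - s₀‖ := norm_add_le _ _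
        _ ≤ ‖s₀‖ + r := by linarith
  obtain ⟨hsumm, hbd⟩ := b_bound_on_ball hx hr (by linarith : (-1:ℝ) < (s₀.re - 1)/2) hball
  have hdiff : DifferentiableOn ℂ (fun s => ∑' m : ℕ, b x (m : ℝ) s) (Metric.ball s₀ r) := by
    apply Complex.differentiableOn_tsum_of_summable_norm hsumm
    · intro m
      intro s hs
      exact (b_differentiableAt x (m : ℝ) ((hball s hs).2.2.1)).differentiableWithinAt
    · exact Metric.isOpen_ball
    · exact fun m s hs => hbd m s hs
  exact ((hdiff.differentiableAt (Metric.isOpen_ball.mem_nhds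
    (Metric.mem_ball_self hr)))).differentiableWithinAt


lemma P_neg_hasDerivAt (x a : ℝ) :
    HasDerivAt (fun z : ℂ => P x a (-z)) (-((Real.log (a + x) : ℝ) : ℂ)) 0 := by
  have := ((hasDerivAt_id (0:ℂ)).neg.mul_const ((Real.log (a + x) : ℝ) : ℂ)).cexp
  simpa [P] using this

lemma P_onesub_hasDerivAt {x a : ℝ} (ha : 0 < a + x) :
    HasDerivAt (fun z : ℂ => P x a (1 - z))
      (-(((a + x : ℝ) : ℂ) * ((Real.log (a + x) : ℝ) : ℂ))) 0 := by
  have := (((hasDerivAt_const (0:ℂ) (1:ℂ)).sub (hasDerivAt_id 0)).mul_const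
    ((Real.log (a + x) : ℝ) : ℂ)).cexp
  simp only [sub_zero, one_mul, zero_sub, neg_one_mul] at this
  have he : Complex.exp ((Real.log (a + x) : ℝ) : ℂ) = ((a + x : ℝ) : ℂ) := by
    rw [← Complex.ofReal_exp, Real.exp_log ha]
  simpa [P, he, mul_comm] using this

lemma g1_hasDerivAt {x : ℝ} (hx : 0 < x) :
    HasDerivAt (fun s : ℂ => P x 0 (1 - s) / (s - 1)) ((x * Real.log x - x : ℝ) : ℂ) 0 := by
  have h0x : (0:ℝ) < 0 + x := by linarith
  have hnum := P_onesub_hasDerivAt h0x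
  have hden : HasDerivAt (fun s : ℂ => s - 1) 1 0 := (hasDerivAt_id 0).sub_const 1
  have hden0 : (fun s : ℂ => s - 1) 0 ≠ 0 := by norm_num
  have hq := hnum.div hden hden0
  have hval : P x 0 ((1:ℂ) - 0) = (((0:ℝ) + x : ℝ) : ℂ) := by rw [sub_zero, P_one h0x]
  rw [hval] at hq
  refine hq.congr_deriv (Eq.symm ?_)
  simp only [zero_add]
  push_cast
  ring

lemma g2_hasDerivAt (x : ℝ) :
    HasDerivAt (fun s : ℂ => P x 0 (-s) / 2) ((-(Real.log x) / 2 : ℝ) : ℂ) 0 := by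
  have := (P_neg_hasDerivAt x 0).div_const 2
  refine this.congr_deriv (Eq.symm ?_)
  simp only [zero_add]
  push_cast
  ring

lemma F_differentiableOn {x : ℝ} (hx : 0 < x) : DifferentiableOn ℂ (F x) V := by
  have h1 := T_differentiableOn hx
  have h2 : DifferentiableOn ℂ (fun s : ℂ => P x 0 (1 - s) / (s - 1)) V := by
    intro s hs
    refine (DifferentiableAt.div ?_ ?_ ?_).differentiableWithinAt
    · exact ((((differentiable_const (1:ℂ)).sub differentiable_id).mul_const _).cexp).differentiableAt
    · exact (differentiable_id.sub_const 1).differentiableAt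
    · exact sub_ne_zero_of_ne hs.2
  have h3 : DifferentiableOn ℂ (fun s : ℂ => P x 0 (-s) / 2) V :=
    fun s _ => (((differentiable_id.neg.mul_const _).cexp.div_const 2) s).differentiableWithinAt
  exact (h1.add h2).add h3

lemma deriv_F_zero {x : ℝ} (hx : 0 < x) :
    deriv (F x) 0 = ((Real.log (Real.Gamma x) - Real.log (2 * Real.pi) / 2 : ℝ) : ℂ) := by
  have hball : ∀ s ∈ Metric.ball (0:ℂ) (1/2),
      -(1/2) ≤ s.re ∧ s.re ≤ 1/2 ∧ s ≠ 1 ∧ ‖s‖ ≤ (1/2 : ℝ) := by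
    intro s hs
    rw [Metric.mem_ball, dist_zero_right] at hs
    have hre : |s.re| ≤ ‖s‖ := Complex.abs_re_le_norm s
    rw [abs_le] at hre
    refine ⟨by linarith [hre.1], by linarith [hre.2], ?_, hs.le⟩
    intro h
    rw [h] at hs
    norm_num at hs
  obtain ⟨hsumm, hbd⟩ := b_bound_on_ball hx (σ₁ := -(1/2)) (σ₂ := 1/2) (R := 1/2)
    one_half_pos (by norm_num) hball
  have hdiffb : ∀ m : ℕ, DifferentiableOn ℂ (fun s => b x (m : ℝ) s) (Metric.ball (0:ℂ) (1/2)) :=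
    fun m s hs => (b_differentiableAt x (m : ℝ) ((hball s hs).2.2.1)).differentiableWithinAt
  have h0U : (0:ℂ) ∈ Metric.ball (0:ℂ) (1/2) := Metric.mem_ball_self one_half_pos
  have hHasSum := Complex.hasSum_deriv_of_summable_norm hsumm hdiffb Metric.isOpen_ball
    (fun m s hs => hbd m s hs) h0U
  have hderiv_b : ∀ m : ℕ, deriv (fun s => b x (m : ℝ) s) 0 = ((d x (m : ℝ) : ℝ) : ℂ) :=
    fun m => (b_hasDerivAt_zero (hpos hx m)).deriv
  have htendsA : Tendsto (fun N : ℕ => ∑ m ∈ range N, deriv (fun s => b x (m : ℝ) s) 0)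
      atTop (𝓝 (deriv (fun s => ∑' m : ℕ, b x (m : ℝ) s) 0)) := hHasSum.tendsto_sum_nat
  have htendsB : Tendsto (fun N : ℕ => ∑ m ∈ range N, deriv (fun s => b x (m : ℝ) s) 0)
      atTop (𝓝 (((Real.log (Real.Gamma x) + x - Real.log (2 * Real.pi) / 2
          - x * Real.log x + Real.log x / 2 : ℝ)) : ℂ)) := by
    have h1 := (Complex.continuous_ofReal.tendsto _).comp (tendsto_sum_d x hx)
    refine h1.congr fun N => ?_
    simp only [Function.comp_apply]
    rw [Complex.ofReal_sum]
    exact Finset.sum_congr rfl fun m _ => (hderiv_b m).symm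
  have hT0 : deriv (fun s => ∑' m : ℕ, b x (m : ℝ) s) 0
      = ((Real.log (Real.Gamma x) + x - Real.log (2 * Real.pi) / 2
          - x * Real.log x + Real.log x / 2 : ℝ) : ℂ) :=
    tendsto_nhds_unique htendsA htendsB
  have hTdiff : DifferentiableAt ℂ (fun s => ∑' m : ℕ, b x (m : ℝ) s) 0 :=
    (Complex.differentiableOn_tsum_of_summable_norm hsumm hdiffb Metric.isOpen_ball
      (fun m s hs => hbd m s hs)).differentiableAt (Metric.isOpen_ball.mem_nhds h0U)
  have htotal := (hTdiff.hasDerivAt.add (g1_hasDerivAt hx)).add (g2_hasDerivAt x)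
  have hF : HasDerivAt (F x)
      (deriv (fun s => ∑' m : ℕ, b x (m : ℝ) s) 0 + ((x * Real.log x - x : ℝ) : ℂ)
        + ((-(Real.log x) / 2 : ℝ) : ℂ)) 0 := htotal
  rw [hF.deriv, hT0]
  push_cast
  ring

end LerchAux

/-- Lerch's formula: for `x > 0`, the analytic continuation `Z` of `s ↦ ζ_H(s; x)`
(holomorphic away from the pole at `s = 1`) satisfies
`ζ_H'(0; x) = log Γ(x) − (1/2) log 2π`. -/
theorem lerch_formula (x : ℝ) (hx : 0 < x) (Z : ℂ → ℂ)
    (hZ : DifferentiableOn ℂ Z {s : ℂ | s ≠ 1})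
    (hZeq : ∀ s : ℂ, 1 < s.re → Z s = hurwitzZetaSeries s x) :
    deriv Z 0 = (Real.log (Real.Gamma x) : ℂ) - (1 / 2 : ℂ) * (Real.log (2 * Real.pi) : ℂ) := by
  have hZan : AnalyticOnNhd ℂ Z LerchAux.V :=
    (hZ.mono (fun s hs => hs.2)).analyticOnNhd LerchAux.V_open
  have hFan : AnalyticOnNhd ℂ (LerchAux.F x) LerchAux.V :=
    (LerchAux.F_differentiableOn hx).analyticOnNhd LerchAux.V_open
  have h2V : (2:ℂ) ∈ LerchAux.V := by
    constructor
    · norm_num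
    · intro h
      norm_num at h
  have hop : IsOpen {s : ℂ | 1 < s.re} := isOpen_lt continuous_const Complex.continuous_re
  have hmem : {s : ℂ | 1 < s.re} ∈ 𝓝 (2:ℂ) := hop.mem_nhds (by norm_num)
  have hev : Z =ᶠ[𝓝 2] LerchAux.F x :=
    Filter.eventually_of_mem hmem
      (fun s hs => (hZeq s hs).trans (LerchAux.F_eq_series hx hs).symm)
  have hEq := hZan.eqOn_of_preconnected_of_eventuallyEq hFan LerchAux.V_preconnected h2V hev
  have h0V : (0:ℂ) ∈ LerchAux.V := by
    constructor
    · norm_num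
    · intro h
      norm_num at h
  have hev0 : Z =ᶠ[𝓝 0] LerchAux.F x := hEq.eventuallyEq_of_mem (LerchAux.V_open.mem_nhds h0V)
  rw [hev0.deriv_eq, LerchAux.deriv_F_zero hx]
  push_cast
  ring
end
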